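/- Polynomial runtime bound for safe aperiodic programs (core of the soundness proof): for every safe and aperiodic program P = prog(x̄){s return y} there exists a polynomial Q with natural-number coefficients such that for all input words w̄, the evaluation tree π_{(μ∅[x̄←w̄], s)} is finite and its number of nodes (i.e., of big-step rule applications) is at most Q(Σᵢ |wᵢ|). -/

import Mathlib

namespace Declass

/-! ### Words over a finite alphabet -/

/-- Words over the alphabet `σ`. -/
abbrev Word (σ : Type) := List σ

/-- An operator signature: a set of operators, each with an arity and a total semantics. -/
structure OpSig (σ : Type) where
  Op : Type
  ar : Op → ℕ
  sem : (o : Op) → (Fin (ar o) → Word σ) → Word σ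

variable {σ : Type}

/-! ### Syntax -/

/-- Expressions of the first-order imperative language. -/
inductive Expr (O : OpSig σ) : Type where
  | var : ℕ → Expr O
  | op : (o : O.Op) → (Fin (O.ar o) → Expr O) → Expr O
  | declass : Expr O → Expr O → Expr O

/-- Statements of the first-order imperative language. -/
inductive Stmt (O : OpSig σ) : Type where
  | skip : Stmt O
  | assign : ℕ → Expr O → Stmt O
  | seq : Stmt O → Stmt O → Stmt O
  | ite : Expr O → Stmt O → Stmt O → Stmt O
  | whileLoop : Expr O → Stmt O → Stmt O
  | brk : Expr O → Stmt O

/-- A program `prog(x̄){s return x}`. -/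
structure Prog (O : OpSig σ) where
  arity : ℕ
  params : Fin arity → ℕ
  body : Stmt O
  ret : ℕ

/-! ### Semantics -/

/-- A memory store: a total map from variables to words. -/
abbrev Store (σ : Type) := ℕ → Word σ

variable {O : OpSig σ}

/-- The initial store `μ∅[x̄ ← w̄]`. -/
def initStore (P : Prog O) (ws : Fin P.arity → Word σ) : Store σ :=
  (List.ofFn fun i => (P.params i, ws i)).foldl
    (fun μ p => Function.update μ p.1 p.2) (fun _ => ([] : Word σ))

/-- Big-step semantics of expressions; `one` is the letter `1`, the word `[one]`
is the boolean `true`, and `declass(e₁,e₂)` evaluates to `1^(min(|w₁|,|w₂|))`. -/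
inductive EvalE (one : σ) : Store σ → Expr O → Word σ → Prop where
  | var : ∀ (μ : Store σ) (x : ℕ), EvalE one μ (.var x) (μ x)
  | op : ∀ (μ : Store σ) (o : O.Op) (es : Fin (O.ar o) → Expr O) (ws : Fin (O.ar o) → Word σ),
      (∀ i, EvalE one μ (es i) (ws i)) → EvalE one μ (.op o es) (O.sem o ws)
  | declass : ∀ (μ : Store σ) (e₁ e₂ : Expr O) (w₁ w₂ : Word σ),
      EvalE one μ e₁ w₁ → EvalE one μ e₂ w₂ →
      EvalE one μ (.declass e₁ e₂) (List.replicate (min w₁.length w₂.length) one)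

/-- Big-step semantics of statements. The boolean flag is `true` for `⊤` (normal
termination) and `false` for `⊥` (a break aborted the control flow). -/
inductive EvalS (one : σ) : Store σ → Stmt O → Bool × Store σ → Prop where
  | skip : ∀ μ : Store σ, EvalS one μ .skip (true, μ)
  | assign : ∀ (μ : Store σ) (x : ℕ) (e : Expr O) (w : Word σ), EvalE one μ e w →
      EvalS one μ (.assign x e) (true, Function.update μ x w)
  | seq_top : ∀ (μ μ' : Store σ) (r : Bool × Store σ) (s₁ s₂ : Stmt O),
      EvalS one μ s₁ (true, μ') → EvalS one μ' s₂ r → EvalS one μ (.seq s₁ s₂) r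
  | seq_brk : ∀ (μ μ' : Store σ) (s₁ s₂ : Stmt O),
      EvalS one μ s₁ (false, μ') → EvalS one μ (.seq s₁ s₂) (false, μ')
  | ite_true : ∀ (μ : Store σ) (e : Expr O) (s₁ s₀ : Stmt O) (r : Bool × Store σ),
      EvalE one μ e [one] → EvalS one μ s₁ r → EvalS one μ (.ite e s₁ s₀) r
  | ite_false : ∀ (μ : Store σ) (e : Expr O) (s₁ s₀ : Stmt O) (w : Word σ) (r : Bool × Store σ),
      EvalE one μ e w → w ≠ [one] → EvalS one μ s₀ r → EvalS one μ (.ite e s₁ s₀) r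
  | while_false : ∀ (μ : Store σ) (e : Expr O) (s : Stmt O) (w : Word σ),
      EvalE one μ e w → w ≠ [one] → EvalS one μ (.whileLoop e s) (true, μ)
  | while_true : ∀ (μ μ' : Store σ) (e : Expr O) (s : Stmt O) (b : Bool),
      EvalE one μ e [one] → EvalS one μ (.seq s (.whileLoop e s)) (b, μ') →
      EvalS one μ (.whileLoop e s) (true, μ')
  | brk_false : ∀ (μ : Store σ) (e : Expr O) (w : Word σ),
      EvalE one μ e w → w ≠ [one] → EvalS one μ (.brk e) (true, μ)
  | brk_true : ∀ (μ : Store σ) (e : Expr O),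
      EvalE one μ e [one] → EvalS one μ (.brk e) (false, μ)

/-- `⟦P⟧(w̄) = v`. -/
def Prog.Outputs (one : σ) (P : Prog O) (ws : Fin P.arity → Word σ) (v : Word σ) : Prop :=
  ∃ μ' : Store σ, EvalS one (initStore P ws) P.body (true, μ') ∧ μ' P.ret = v

/-- `P ∈ TERM`: the partial function `⟦P⟧` is total. -/
def Prog.Terminating (one : σ) (P : Prog O) : Prop :=
  ∀ ws : Fin P.arity → Word σ, ∃ v, P.Outputs one ws v

/-- The (partial) function `⟦P⟧` coincides with the total function `f`. -/
def Prog.Computes (one : σ) (P : Prog O) (f : (Fin P.arity → Word σ) → Word σ) : Prop :=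
  ∀ (ws : Fin P.arity → Word σ) (v : Word σ), P.Outputs one ws v ↔ v = f ws

/-! ### Operator classification -/

/-- `maxᵢ |wᵢ|`. -/
def maxSize {k : ℕ} (ws : Fin k → Word σ) : ℕ :=
  Finset.univ.sup fun i => (ws i).length

/-- A neutral operator: a predicate (into `{0,1}`) or a subword operation. -/
def NeutralOp (zero one : σ) (O : OpSig σ) (o : O.Op) : Prop :=
  (∀ ws, O.sem o ws = [zero] ∨ O.sem o ws = [one]) ∨
  ∃ i : Fin (O.ar o), ∀ ws, (O.sem o ws) <:+: (ws i)

/-- A positive operator: `|⟦op⟧(w̄)| ≤ maxᵢ |wᵢ| + c`. -/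
def PositiveOp (O : OpSig σ) (o : O.Op) : Prop :=
  ∃ c : ℕ, ∀ ws, (O.sem o ws).length ≤ maxSize ws + c

/-- A polynomial operator: `|⟦op⟧(w̄)| ≤ Q(maxᵢ |wᵢ|)`. -/
def PolyOp (O : OpSig σ) (o : O.Op) : Prop :=
  ∃ Q : Polynomial ℕ, ∀ ws, (O.sem o ws).length ≤ Q.eval (maxSize ws)

/-! ### Polynomial-time computability (FP) -/

/-- The trivial encoding of words over `σ` as strings over `σ`. -/
def wordEncoding (σ : Type) [Fintype σ] : Computability.Encoding (Word σ) σ where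
  encode := id
  decode := some
  decode_encode _ := rfl

/-- Encoding of tuples of words, using a fresh separator symbol. -/
def tupleEncoding (σ : Type) [Fintype σ] [DecidableEq σ] (n : ℕ) :
    Computability.Encoding (Fin n → Word σ) (Option σ) where
  encode ws := List.intercalate [none] (List.ofFn fun i => (ws i).map some)
  decode l :=
    if h0 : n = 0 then
      if l = [] then some (fun i => absurd i.2 (by omega)) else none
    else if h : (@List.splitOn _ instBEqOfDecidableEq none l).length = n then
      some fun i => ((@List.splitOn _ instBEqOfDecidableEq none l).get (Fin.cast h.symm i)).reduceOption
    else none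
  decode_encode ws := by
    by_cases h0 : n = 0
    · subst h0
      have henc : List.intercalate [none] (List.ofFn fun i : Fin 0 => (ws i).map some)
          = ([] : List (Option σ)) := by simp [List.intercalate]
      simp only [henc, dif_pos rfl, if_pos rfl]
      exact congrArg some (funext fun i => i.elim0)
    · have hsplit : (@List.splitOn _ instBEqOfDecidableEq none
            (List.intercalate [none] (List.ofFn fun i => (ws i).map some)))
          = List.ofFn fun i => (ws i).map some := by
        apply @List.splitOn_intercalate _ _ instBEqOfDecidableEq _
        · intro l hl
          simp only [List.mem_ofFn] at hl
          obtain ⟨i, rfl⟩ := hl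
          simp
        · simp only [ne_eq, List.ofFn_eq_nil_iff]
          omega
      have hred : ∀ w : Word σ, (w.map some).reduceOption = w := by
        intro w
        induction w with
        | nil => rfl
        | cons a t ih => simpa [List.reduceOption_cons_of_some] using ih
      simp only [h0, dite_false, hsplit, List.length_ofFn, dite_true, dif_neg, dif_pos]
      congr 1
      funext i
      simp [hsplit, List.getElem_ofFn, hred]

/-- `f ∈ FP`: `f` is computable in polynomial time by a (deterministic) Turing machine. -/
def InFP [Fintype σ] [DecidableEq σ] {n : ℕ} (f : (Fin n → Word σ) → Word σ) : Prop :=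
  Nonempty (Turing.TM2ComputableInPolyTime (tupleEncoding σ n).encode (wordEncoding σ).encode f)

/-! ### The level-based type system -/

/-- An operator typing environment: `Δ(op)(τin, τout)` is a set of admissible
functional levels `τ₁ → … → τ_{ar(op)+1}` (viewed as tuples). -/
abbrev OpEnv (O : OpSig σ) := (o : O.Op) → ℕ → ℕ → Set (Fin (O.ar o + 1) → ℕ)

/-- Typing judgments for expressions: `Γ, Δ ⊢^{τin}_{τout} e : τ`. -/
inductive TypE (Γ : ℕ → ℕ) (Δ : OpEnv O) : ℕ → ℕ → Expr O → ℕ → Prop where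
  | var : ∀ (τin τout : ℕ) (x : ℕ), TypE Γ Δ τin τout (.var x) (Γ x)
  | op : ∀ (τin τout : ℕ) (o : O.Op) (es : Fin (O.ar o) → Expr O)
      (τs : Fin (O.ar o + 1) → ℕ), τs ∈ Δ o τin τout →
      (∀ i : Fin (O.ar o), TypE Γ Δ τin τout (es i) (τs i.castSucc)) →
      TypE Γ Δ τin τout (.op o es) (τs (Fin.last _))
  | declass : ∀ (τin τout : ℕ) (e₁ e₂ : Expr O) (τ₁ τ : ℕ),
      TypE Γ Δ τin τout e₁ τ₁ → TypE Γ Δ τin τout e₂ τout →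
      τ₁ ≤ τ → τ ≤ τout → TypE Γ Δ τin τout (.declass e₁ e₂) τ

/-- Typing judgments for statements: `Γ, Δ ⊢^{τin}_{τout} s : τ` (Figure 3). -/
inductive TypS (Γ : ℕ → ℕ) (Δ : OpEnv O) : ℕ → ℕ → Stmt O → ℕ → Prop where
  | sub : ∀ (τin τout : ℕ) (s : Stmt O) (τ₁ τ₂ : ℕ),
      TypS Γ Δ τin τout s τ₁ → τ₁ ≤ τ₂ → TypS Γ Δ τin τout s τ₂
  | skip : ∀ τin τout : ℕ, TypS Γ Δ τin τout .skip 0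
  | assign : ∀ (τin τout : ℕ) (x : ℕ) (e : Expr O) (τ₂ : ℕ),
      TypE Γ Δ τin τout e τ₂ → (τout = 0 ∨ Γ x ≤ τ₂) →
      TypS Γ Δ τin τout (.assign x e) (Γ x)
  | seq : ∀ (τin τout : ℕ) (s₁ s₂ : Stmt O) (τ : ℕ),
      TypS Γ Δ τin τout s₁ τ → TypS Γ Δ τin τout s₂ τ →
      TypS Γ Δ τin τout (.seq s₁ s₂) τ
  | cond : ∀ (τin τout : ℕ) (e : Expr O) (s₁ s₀ : Stmt O) (τ : ℕ),
      TypE Γ Δ τin τout e τ → TypS Γ Δ τin τout s₁ τ → TypS Γ Δ τin τout s₀ τ →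
      TypS Γ Δ τin τout (.ite e s₁ s₀) τ
  | whileNested : ∀ (τin τout : ℕ) (e : Expr O) (s : Stmt O) (τ : ℕ),
      TypE Γ Δ τ τout e τ → TypS Γ Δ τ τout s τ → 1 ≤ τ → τ ≤ τout →
      TypS Γ Δ τin τout (.whileLoop e s) τ
  | whileInit : ∀ (e : Expr O) (s : Stmt O) (τ : ℕ),
      TypE Γ Δ τ τ e τ → TypS Γ Δ τ τ s τ → 1 ≤ τ →
      TypS Γ Δ 0 0 (.whileLoop e s) τ
  | brk : ∀ (τin τout : ℕ) (e : Expr O) (τ : ℕ),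
      TypE Γ Δ τin τout e τ → τin ≤ τ → TypS Γ Δ τin τout (.brk e) τin

/-- A safe operator typing environment (Definition 2.2). -/
def SafeOpEnv [Fintype σ] [DecidableEq σ] (zero one : σ) (Δ : OpEnv O) : Prop :=
  ∀ o : O.Op,
    (NeutralOp zero one O o ∨ PositiveOp O o ∨ PolyOp O o) ∧
    InFP (O.sem o) ∧
    ∀ (τin τout : ℕ) (τs : Fin (O.ar o + 1) → ℕ), τs ∈ Δ o τin τout →
      (NeutralOp zero one O o →
        ∀ i : Fin (O.ar o), τs (Fin.last _) ≤ τs i.castSucc) ∧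
      ((PositiveOp O o ∧ ¬ NeutralOp zero one O o) →
        (∀ i : Fin (O.ar o), τs (Fin.last _) ≤ τs i.castSucc) ∧
        (τs (Fin.last _) < τin ∨ τs (Fin.last _) = 0)) ∧
      ((PolyOp O o ∧ ¬ PositiveOp O o) → τout = 0)

/-- `P ∈ ΔSAFE`. -/
def DeltaSafe (Δ : OpEnv O) (P : Prog O) : Prop :=
  ∃ (Γ : ℕ → ℕ) (τ : ℕ), TypS Γ Δ 0 0 P.body τ

/-- `P ∈ SAFE`. -/
def Safe [Fintype σ] [DecidableEq σ] (zero one : σ) (P : Prog O) : Prop :=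
  ∃ Δ : OpEnv O, SafeOpEnv zero one Δ ∧ DeltaSafe Δ P

/-! ### Aperiodicity -/

/-- The set `U(e)` of undeclassified variables of an expression. -/
def undecl : Expr O → Set ℕ
  | .var x => {x}
  | .op _ es => ⋃ i, undecl (es i)
  | .declass _ e₂ => undecl e₂

/-- `μ ≡_e μ'`: the stores agree on all undeclassified variables of `e`. -/
def EquivOn (e : Expr O) (μ μ' : Store σ) : Prop :=
  ∀ x ∈ undecl e, μ x = μ' x

/-- One step of the subtree relation of the (possibly infinite) evaluation tree:
`SubConf one c c'` holds iff `π_{c'}` is an immediate (statement-)subtree of `π_c`. -/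
inductive SubConf (one : σ) : Store σ × Stmt O → Store σ × Stmt O → Prop where
  | seq_left : ∀ (μ : Store σ) (s₁ s₂ : Stmt O), SubConf one (μ, .seq s₁ s₂) (μ, s₁)
  | seq_right : ∀ (μ μ' : Store σ) (s₁ s₂ : Stmt O),
      EvalS one μ s₁ (true, μ') → SubConf one (μ, .seq s₁ s₂) (μ', s₂)
  | ite_true : ∀ (μ : Store σ) (e : Expr O) (s₁ s₀ : Stmt O),
      EvalE one μ e [one] → SubConf one (μ, .ite e s₁ s₀) (μ, s₁)
  | ite_false : ∀ (μ : Store σ) (e : Expr O) (s₁ s₀ : Stmt O) (w : Word σ),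
      EvalE one μ e w → w ≠ [one] → SubConf one (μ, .ite e s₁ s₀) (μ, s₀)
  | while_true : ∀ (μ : Store σ) (e : Expr O) (s : Stmt O),
      EvalE one μ e [one] →
      SubConf one (μ, .whileLoop e s) (μ, .seq s (.whileLoop e s))

/-- No while loop reachable from `(μ, s₀)` is ever evaluated twice (one occurrence
strictly inside the other) under `e`-equivalent stores. -/
def NoRepeat (one : σ) (s₀ : Stmt O) (μ : Store σ) : Prop :=
  ¬ ∃ (e : Expr O) (s : Stmt O) (μ' μ'' : Store σ),
      Relation.ReflTransGen (SubConf one) (μ, s₀) (μ', .whileLoop e s) ∧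
      Relation.TransGen (SubConf one) (μ', .whileLoop e s) (μ'', .whileLoop e s) ∧
      EquivOn e μ' μ''

/-- `P ∈ AP`: `P` is aperiodic. -/
def Aperiodic (one : σ) (P : Prog O) : Prop :=
  ∀ μ : Store σ, NoRepeat one P.body μ


/-! ### Size of evaluation trees -/

/-- Big-step evaluation of expressions, additionally counting the number of
nodes (rule applications) of the evaluation tree. -/
inductive EvalEN (one : σ) : Store σ → Expr O → Word σ → ℕ → Prop where
  | var : ∀ (μ : Store σ) (x : ℕ), EvalEN one μ (.var x) (μ x) 1
  | op : ∀ (μ : Store σ) (o : O.Op) (es : Fin (O.ar o) → Expr O)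
      (ws : Fin (O.ar o) → Word σ) (ns : Fin (O.ar o) → ℕ),
      (∀ i, EvalEN one μ (es i) (ws i) (ns i)) →
      EvalEN one μ (.op o es) (O.sem o ws) (1 + Finset.univ.sum ns)
  | declass : ∀ (μ : Store σ) (e₁ e₂ : Expr O) (w₁ w₂ : Word σ) (n₁ n₂ : ℕ),
      EvalEN one μ e₁ w₁ n₁ → EvalEN one μ e₂ w₂ n₂ →
      EvalEN one μ (.declass e₁ e₂)
        (List.replicate (min w₁.length w₂.length) one) (1 + n₁ + n₂)

/-- Big-step evaluation of statements, additionally counting the number of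
nodes (rule applications) of the evaluation tree. -/
inductive EvalSN (one : σ) : Store σ → Stmt O → Bool × Store σ → ℕ → Prop where
  | skip : ∀ μ : Store σ, EvalSN one μ .skip (true, μ) 1
  | assign : ∀ (μ : Store σ) (x : ℕ) (e : Expr O) (w : Word σ) (n : ℕ),
      EvalEN one μ e w n →
      EvalSN one μ (.assign x e) (true, Function.update μ x w) (1 + n)
  | seq_top : ∀ (μ μ' : Store σ) (r : Bool × Store σ) (s₁ s₂ : Stmt O) (n₁ n₂ : ℕ),
      EvalSN one μ s₁ (true, μ') n₁ → EvalSN one μ' s₂ r n₂ →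
      EvalSN one μ (.seq s₁ s₂) r (1 + n₁ + n₂)
  | seq_brk : ∀ (μ μ' : Store σ) (s₁ s₂ : Stmt O) (n₁ : ℕ),
      EvalSN one μ s₁ (false, μ') n₁ → EvalSN one μ (.seq s₁ s₂) (false, μ') (1 + n₁)
  | ite_true : ∀ (μ : Store σ) (e : Expr O) (s₁ s₀ : Stmt O) (r : Bool × Store σ) (m n : ℕ),
      EvalEN one μ e [one] m → EvalSN one μ s₁ r n →
      EvalSN one μ (.ite e s₁ s₀) r (1 + m + n)
  | ite_false : ∀ (μ : Store σ) (e : Expr O) (s₁ s₀ : Stmt O) (w : Word σ)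
      (r : Bool × Store σ) (m n : ℕ),
      EvalEN one μ e w m → w ≠ [one] → EvalSN one μ s₀ r n →
      EvalSN one μ (.ite e s₁ s₀) r (1 + m + n)
  | while_false : ∀ (μ : Store σ) (e : Expr O) (s : Stmt O) (w : Word σ) (m : ℕ),
      EvalEN one μ e w m → w ≠ [one] → EvalSN one μ (.whileLoop e s) (true, μ) (1 + m)
  | while_true : ∀ (μ μ' : Store σ) (e : Expr O) (s : Stmt O) (b : Bool) (m n : ℕ),
      EvalEN one μ e [one] m → EvalSN one μ (.seq s (.whileLoop e s)) (b, μ') n →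
      EvalSN one μ (.whileLoop e s) (true, μ') (1 + m + n)
  | brk_false : ∀ (μ : Store σ) (e : Expr O) (w : Word σ) (m : ℕ),
      EvalEN one μ e w m → w ≠ [one] → EvalSN one μ (.brk e) (true, μ) (1 + m)
  | brk_true : ∀ (μ : Store σ) (e : Expr O) (m : ℕ),
      EvalEN one μ e [one] m → EvalSN one μ (.brk e) (false, μ) (1 + m)

/-! ### Auxiliary infrastructure for the proof -/

section Aux

variable {σ : Type} {O : OpSig σ}

/-- Syntactic size of an expression; this equals the node count of its evaluation tree. -/
def esize : Expr O → ℕ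
  | .var _ => 1
  | .op _ es => 1 + ∑ i, esize (es i)
  | .declass a b => 1 + esize a + esize b

/-- The (finite) set of variables of an expression. -/
def exprVars : Expr O → Finset ℕ
  | .var x => {x}
  | .op _ es => Finset.univ.biUnion fun i => exprVars (es i)
  | .declass a b => exprVars a ∪ exprVars b

/-- The (finite) set of variables of a statement. -/
def stmtVars : Stmt O → Finset ℕ
  | .skip => ∅
  | .assign x e => insert x (exprVars e)
  | .seq a b => stmtVars a ∪ stmtVars b
  | .ite e a b => exprVars e ∪ (stmtVars a ∪ stmtVars b)
  | .whileLoop e s => exprVars e ∪ stmtVars s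
  | .brk e => exprVars e

/-- Finset version of the undeclassified variables. -/
def undeclF : Expr O → Finset ℕ
  | .var x => {x}
  | .op _ es => Finset.univ.biUnion fun i => undeclF (es i)
  | .declass _ b => undeclF b

lemma undeclF_subset (e : Expr O) : undeclF e ⊆ exprVars e := by
  induction e with
  | var x => simp [undeclF, exprVars]
  | op o es ih =>
    simp only [undeclF, exprVars]
    intro x hx
    simp only [Finset.mem_biUnion] at hx ⊢
    obtain ⟨i, _, hi⟩ := hx
    exact ⟨i, Finset.mem_univ i, ih i hi⟩
  | declass a b iha ihb =>
    simp only [undeclF, exprVars]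
    exact fun x hx => Finset.mem_union_right _ (ihb hx)

lemma undecl_eq_undeclF (e : Expr O) : undecl e = ↑(undeclF e) := by
  induction e with
  | var x => simp [undecl, undeclF]
  | op o es ih =>
    simp only [undecl, undeclF, Finset.coe_biUnion, Finset.mem_coe, Finset.mem_univ,
      Set.iUnion_true]
    exact Set.iUnion_congr ih
  | declass a b iha ihb => simpa [undecl, undeclF] using ihb

/-- All infixes (subwords) of a word, as a finset. -/
def infixesF [DecidableEq σ] (w : Word σ) : Finset (Word σ) :=
  (w.tails.flatMap List.inits).toFinset

lemma mem_infixesF [DecidableEq σ] {v w : Word σ} : v ∈ infixesF w ↔ v <:+: w := by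
  simp only [infixesF, List.mem_toFinset, List.mem_flatMap, List.mem_tails, List.mem_inits]
  rw [List.infix_iff_prefix_suffix]
  tauto

lemma card_infixesF [DecidableEq σ] (w : Word σ) :
    (infixesF w).card ≤ (w.length + 1) * (w.length + 1) := by
  refine le_trans (List.toFinset_card_le _) ?_
  rw [List.length_flatMap]
  refine le_trans (List.sum_le_card_nsmul _ (w.length + 1) ?_) ?_
  · intro x hx
    simp only [List.mem_map, List.mem_tails] at hx
    obtain ⟨t, ht, rfl⟩ := hx
    simp only [Function.comp_apply, List.length_inits]
    exact Nat.succ_le_succ ht.length_le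
  · simp [List.length_tails, smul_eq_mul]

lemma infix_replicate {one : σ} {k : ℕ} {v : Word σ} (h : v <:+: List.replicate k one) :
    v = List.replicate v.length one ∧ v.length ≤ k := by
  refine ⟨List.eq_replicate_length.mpr fun b hb => List.eq_of_mem_replicate (h.subset hb), ?_⟩
  simpa using h.length_le

lemma infix_singleton {a : σ} {v : Word σ} (h : v <:+: [a]) : v = [] ∨ v = [a] :=
  List.sublist_singleton.mp h.sublist

lemma peval_mono (p : Polynomial ℕ) : Monotone fun t => p.eval t := by
  induction p using Polynomial.induction_on' with
  | add p q hp hq => simpa [Polynomial.eval_add] using hp.add hq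
  | monomial n a =>
    intro x y h
    simp only [Polynomial.eval_monomial]
    exact Nat.mul_le_mul_left _ (Nat.pow_le_pow_left h n)

/-- Totality of expression evaluation, with node count equal to the syntactic size. -/
lemma exprTotal (one : σ) (μ : Store σ) (e : Expr O) :
    ∃ w, EvalEN one μ e w (esize e) := by
  induction e with
  | var x => exact ⟨_, .var μ x⟩
  | op o es ih =>
    choose ws h using ih
    exact ⟨_, by rw [esize]; exact EvalEN.op μ o es ws (fun i => esize (es i)) h⟩
  | declass a b iha ihb =>
    obtain ⟨wa, ha⟩ := iha
    obtain ⟨wb, hb⟩ := ihb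
    exact ⟨_, by rw [esize]; exact EvalEN.declass μ a b wa wb _ _ ha hb⟩

lemma EvalEN.toEvalE {one : σ} {μ : Store σ} {e : Expr O} {w n}
    (h : EvalEN one μ e w n) : EvalE one μ e w := by
  induction h with
  | var _ => exact .var _ _
  | op _ _ _ _ _ ih => exact .op _ _ _ _ ih
  | declass _ _ _ _ _ _ _ _ ih₁ ih₂ => exact .declass _ _ _ _ _ ih₁ ih₂

lemma EvalSN.toEvalS {one : σ} {μ : Store σ} {s : Stmt O} {r n}
    (h : EvalSN one μ s r n) : EvalS one μ s r := by
  induction h with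
  | skip => exact .skip _
  | assign _ _ _ _ _ he => exact .assign _ _ _ _ he.toEvalE
  | seq_top _ _ _ _ _ _ _ _ _ ih₁ ih₂ => exact .seq_top _ _ _ _ _ ih₁ ih₂
  | seq_brk _ _ _ _ _ _ ih => exact .seq_brk _ _ _ _ ih
  | ite_true _ _ _ _ _ _ _ he _ ih => exact .ite_true _ _ _ _ _ he.toEvalE ih
  | ite_false _ _ _ _ _ _ _ _ he hne _ ih => exact .ite_false _ _ _ _ _ _ he.toEvalE hne ih
  | while_false _ _ _ _ _ he hne => exact .while_false _ _ _ _ he.toEvalE hne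
  | while_true _ _ _ _ _ _ _ he _ ih => exact .while_true _ _ _ _ _ he.toEvalE ih
  | brk_false _ _ _ _ he hne => exact .brk_false _ _ _ he.toEvalE hne
  | brk_true _ _ _ he => exact .brk_true _ _ he.toEvalE

/-- Max length of the values of the variables of level at least `ℓ` (within `X`). -/
def lvlSize (Γ : ℕ → ℕ) (X : Finset ℕ) (ℓ : ℕ) (μ : Store σ) : ℕ :=
  (X.filter fun x => ℓ ≤ Γ x).sup fun x => (μ x).length

lemma length_le_lvlSize {Γ : ℕ → ℕ} {X : Finset ℕ} {ℓ : ℕ} {μ : Store σ} {x : ℕ}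
    (hx : x ∈ X) (hℓ : ℓ ≤ Γ x) : (μ x).length ≤ lvlSize Γ X ℓ μ :=
  Finset.le_sup (f := fun x => (μ x).length) (Finset.mem_filter.mpr ⟨hx, hℓ⟩)

lemma lvlSize_anti {Γ : ℕ → ℕ} {X : Finset ℕ} {ℓ ℓ' : ℕ} (h : ℓ ≤ ℓ') (μ : Store σ) :
    lvlSize Γ X ℓ' μ ≤ lvlSize Γ X ℓ μ :=
  Finset.sup_mono (Finset.monotone_filter_right X fun x _ hx => le_trans h hx)

lemma lvlSize_update_le {Γ : ℕ → ℕ} {X : Finset ℕ} {ℓ : ℕ} {μ : Store σ} {x : ℕ} {w : Word σ} :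
    lvlSize Γ X ℓ (Function.update μ x w) ≤ max (lvlSize Γ X ℓ μ) w.length := by
  refine Finset.sup_le fun y hy => ?_
  rcases eq_or_ne y x with rfl | hne
  · simp [Function.update_self]
  · rw [Function.update_of_ne hne]
    exact le_max_of_le_left (Finset.le_sup (f := fun x => (μ x).length) hy)

lemma lvlSize_update_of_lt {Γ : ℕ → ℕ} {X : Finset ℕ} {ℓ : ℕ} {μ : Store σ} {x : ℕ}
    {w : Word σ} (h : Γ x < ℓ) :
    lvlSize Γ X ℓ (Function.update μ x w) = lvlSize Γ X ℓ μ := by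
  refine Finset.sup_congr rfl fun y hy => ?_
  rcases Finset.mem_filter.mp hy with ⟨_, hℓ⟩
  rw [Function.update_of_ne]
  rintro rfl
  omega

end Aux

section TypingFacts

variable {σ : Type} {O : OpSig σ} [Fintype σ] [DecidableEq σ]
variable {zero one : σ} {Γ : ℕ → ℕ} {Δ : OpEnv O} {X : Finset ℕ}

lemma posBound (O : OpSig σ) (o : O.Op) :
    ∃ c : ℕ, PositiveOp O o → ∀ ws, (O.sem o ws).length ≤ maxSize ws + c := by
  by_cases h : PositiveOp O o
  · obtain ⟨c, hc⟩ := h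
    exact ⟨c, fun _ => hc⟩
  · exact ⟨0, fun hh => absurd hh h⟩

/-- The additive growth constant of a positive operator. -/
noncomputable def posC (O : OpSig σ) (o : O.Op) : ℕ := (posBound O o).choose

lemma posC_spec {o : O.Op} (h : PositiveOp O o) (ws : Fin (O.ar o) → Word σ) :
    (O.sem o ws).length ≤ maxSize ws + posC O o :=
  (posBound O o).choose_spec h ws

/-- Sum of the growth constants of the (positive) operators of an expression. -/
noncomputable def cExpr : Expr O → ℕ
  | .var _ => 0
  | .op o es => posC O o + ∑ i, cExpr (es i)
  | .declass a b => cExpr a + cExpr b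

/-- Polynomial length bound for an expression, given length bounds for each operator. -/
noncomputable def qExpr (Qop : O.Op → Polynomial ℕ) : Expr O → Polynomial ℕ
  | .var _ => Polynomial.X
  | .op o es => (Qop o).comp (∑ i, qExpr Qop (es i))
  | .declass a b => qExpr Qop a

lemma exprVars_op_subset {o : O.Op} {es : Fin (O.ar o) → Expr O} (i : Fin (O.ar o)) :
    exprVars (es i) ⊆ exprVars (Expr.op o es) := by
  intro y hy
  simp only [exprVars, Finset.mem_biUnion]
  exact ⟨i, Finset.mem_univ i, hy⟩

lemma safe_op_cases (hΔ : SafeOpEnv zero one Δ) {o : O.Op} {τin τout : ℕ}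
    {τs : Fin (O.ar o + 1) → ℕ} (hm : τs ∈ Δ o τin τout) (ho : 1 ≤ τout) :
    (∀ i : Fin (O.ar o), τs (Fin.last _) ≤ τs i.castSucc) ∧
    (NeutralOp zero one O o ∨
      (PositiveOp O o ∧ (τs (Fin.last _) < τin ∨ τs (Fin.last _) = 0))) := by
  obtain ⟨hclass, -, hτs⟩ := hΔ o
  obtain ⟨hN, hP, hQ⟩ := hτs τin τout τs hm
  by_cases hn : NeutralOp zero one O o
  · exact ⟨hN hn, Or.inl hn⟩
  · by_cases hp : PositiveOp O o
    · obtain ⟨h1, h2⟩ := hP ⟨hp, hn⟩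
      exact ⟨h1, Or.inr ⟨hp, h2⟩⟩
    · rcases hclass with h | h | h
      · exact absurd h hn
      · exact absurd h hp
      · exact absurd (hQ ⟨h, hp⟩) (by omega)

/-- Undeclassified variables of a level-`p` expression have level at least `p`. -/
lemma undecl_level (hΔ : SafeOpEnv zero one Δ) {τin τout : ℕ} {e : Expr O} {p : ℕ}
    (h : TypE Γ Δ τin τout e p) : 1 ≤ τout → ∀ x ∈ undeclF e, p ≤ Γ x := by
  induction h with
  | var x =>
    intro _ y hy
    simp only [undeclF, Finset.mem_singleton] at hy
    subst hy; exact le_rfl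
  | op o es τs hm hargs ih =>
    intro ho y hy
    simp only [undeclF, Finset.mem_biUnion] at hy
    obtain ⟨i, -, hi⟩ := hy
    exact le_trans ((safe_op_cases hΔ hm ho).1 i) (ih i ho y hi)
  | declass e₁ e₂ τ₁ τ h1 h2 hle1 hle2 ih₁ ih₂ =>
    intro ho y hy
    exact le_trans hle2 (ih₂ ho y hy)

/-- Length bound for expressions evaluated inside a loop (`τout ≥ 1`):
additive growth in terms of the values of level at least `p`. -/
lemma exprSize (hΔ : SafeOpEnv zero one Δ) {μ : Store σ} {e : Expr O} {w : Word σ}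
    (hE : EvalE one μ e w) :
    ∀ {τin τout p : ℕ}, TypE Γ Δ τin τout e p → 1 ≤ τout → exprVars e ⊆ X →
      w.length ≤ max (lvlSize Γ X p μ) 1 + cExpr e := by
  induction hE with
  | var x =>
    intro τin τout p h _ hX
    cases h
    exact le_trans (le_trans (length_le_lvlSize (hX (by simp [exprVars])) le_rfl)
      (le_max_left _ _)) (Nat.le_add_right _ _)
  | op o es ws hargs ih =>
    intro τin τout p h ho hX
    cases h with
    | op _ _ τs hm hargty =>
      obtain ⟨hmono, hcl⟩ := safe_op_cases hΔ hm ho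
      have hXi : ∀ i, exprVars (es i) ⊆ X := fun i => (exprVars_op_subset i).trans hX
      have hcle : ∀ i, cExpr (es i) ≤ cExpr (Expr.op o es) := by
        intro i
        rw [cExpr]
        exact le_trans (Finset.single_le_sum (f := fun i => cExpr (es i))
          (fun j _ => Nat.zero_le _) (Finset.mem_univ i)) (Nat.le_add_left _ _)
      have hargs_le : ∀ i, (ws i).length ≤
          max (lvlSize Γ X (τs (Fin.last _)) μ) 1 + cExpr (Expr.op o es) := by
        intro i
        refine le_trans (ih i (hargty i) ho (hXi i)) (add_le_add ?_ (hcle i))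
        exact max_le_max (lvlSize_anti (hmono i) μ) le_rfl
      rcases hcl with hn | ⟨hp, -⟩
      · rcases hn with hval | ⟨i, hsub⟩
        · have hb : (O.sem o ws).length ≤ 1 := by
            rcases hval ws with h0 | h1
            · simp [h0]
            · simp [h1]
          exact le_trans hb (le_trans (le_max_right _ _) (Nat.le_add_right _ _))
        · exact le_trans (hsub ws).length_le (hargs_le i)
      · have hmax : maxSize ws ≤ max (lvlSize Γ X (τs (Fin.last _)) μ) 1 +
            ∑ i, cExpr (es i) := by
          refine Finset.sup_le fun i _ => ?_
          refine le_trans (ih i (hargty i) ho (hXi i)) (add_le_add ?_ ?_)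
          · exact max_le_max (lvlSize_anti (hmono i) μ) le_rfl
          · exact Finset.single_le_sum (f := fun i => cExpr (es i))
              (fun j _ => Nat.zero_le _) (Finset.mem_univ i)
        have := posC_spec hp ws
        rw [cExpr]
        omega
  | declass e₁ e₂ w₁ w₂ h₁ h₂ ih₁ ih₂ =>
    intro τin τout p h ho hX
    cases h with
    | declass _ _ τ₁ _ ha hb hle1 hle2 =>
      have hX₂ : exprVars e₂ ⊆ X := fun y hy =>
        hX (by simp only [exprVars, Finset.mem_union]; exact Or.inr hy)
      have h2 : w₂.length ≤ max (lvlSize Γ X τout μ) 1 + cExpr e₂ := ih₂ hb ho hX₂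
      have hτ : lvlSize Γ X τout μ ≤ lvlSize Γ X p μ := lvlSize_anti hle2 μ
      rw [List.length_replicate, cExpr]
      omega

/-- Value preservation for expressions of level at least `ℓ` inside a loop:
values stay in a subword-closed set `V`. -/
lemma exprCons (hΔ : SafeOpEnv zero one Δ) {V : Set (Word σ)} {L : ℕ}
    (hsub : ∀ ⦃v w⦄, w ∈ V → v <:+: w → v ∈ V) (hz : [zero] ∈ V) (hone : [one] ∈ V)
    (hun : ∀ k ≤ L, List.replicate k one ∈ V) (hbd : ∀ w ∈ V, w.length ≤ L)
    {ℓ : ℕ} {μ : Store σ} {e : Expr O} {w : Word σ} (hE : EvalE one μ e w) :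
    ∀ {τin τout p : ℕ}, TypE Γ Δ τin τout e p → 1 ≤ τin → τin ≤ ℓ → ℓ ≤ p → 1 ≤ τout →
      exprVars e ⊆ X → (∀ x ∈ X, ℓ ≤ Γ x → μ x ∈ V) → w ∈ V := by
  induction hE with
  | var x =>
    intro τin τout p h h1 h2 h3 h4 hX hmem
    cases h
    exact hmem x (hX (by simp [exprVars])) h3
  | op o es ws hargs ih =>
    intro τin τout p h h1 h2 h3 h4 hX hmem
    cases h with
    | op _ _ τs hm hargty =>
      obtain ⟨hmono, hcl⟩ := safe_op_cases hΔ hm h4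
      rcases hcl with hn | ⟨-, hzero⟩
      · rcases hn with hval | ⟨i, hsub'⟩
        · rcases hval ws with h0 | h1'
          · rw [h0]; exact hz
          · rw [h1']; exact hone
        · refine hsub ?_ (hsub' ws)
          exact ih i (hargty i) h1 h2 (le_trans h3 (hmono i)) h4
            ((exprVars_op_subset i).trans hX) hmem
      · omega
  | declass e₁ e₂ w₁ w₂ h₁ h₂ ih₁ ih₂ =>
    intro τin τout p h h1 h2 h3 h4 hX hmem
    cases h with
    | declass _ _ τ₁ _ ha hb hle1 hle2 =>
      have hX₂ : exprVars e₂ ⊆ X := fun y hy =>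
        hX (by simp only [exprVars, Finset.mem_union]; exact Or.inr hy)
      have hw₂ : w₂ ∈ V := ih₂ hb h1 h2 (le_trans h3 hle2) h4 hX₂ hmem
      exact hun _ (le_trans (min_le_right _ _) (hbd _ hw₂))

end TypingFacts

section Inversion

variable {σ : Type} {O : OpSig σ} {Γ : ℕ → ℕ} {Δ : OpEnv O}

lemma typS_assign_inv {τin τout t : ℕ} {s : Stmt O} (h : TypS Γ Δ τin τout s t) :
    ∀ x e, s = .assign x e →
      ∃ τ₂, TypE Γ Δ τin τout e τ₂ ∧ (τout = 0 ∨ Γ x ≤ τ₂) ∧ Γ x ≤ t := by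
  induction h with
  | sub _ _ _ _ _ _ hle ih =>
    intro x e hs
    obtain ⟨τ₂, h1, h2, h3⟩ := ih x e hs
    exact ⟨τ₂, h1, h2, le_trans h3 hle⟩
  | assign _ _ x e τ₂ hE hc =>
    intro x' e' hs
    cases hs
    exact ⟨τ₂, hE, hc, le_rfl⟩
  | skip _ _ => intro _ _ hs; cases hs
  | seq _ _ _ _ _ _ _ _ _ => intro _ _ hs; cases hs
  | cond _ _ _ _ _ _ _ _ _ _ _ => intro _ _ hs; cases hs
  | whileNested _ _ _ _ _ _ _ _ _ _ => intro _ _ hs; cases hs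
  | whileInit _ _ _ _ _ _ _ => intro _ _ hs; cases hs
  | brk _ _ _ _ _ _ => intro _ _ hs; cases hs

lemma typS_seq_inv {τin τout t : ℕ} {s : Stmt O} (h : TypS Γ Δ τin τout s t) :
    ∀ s₁ s₂, s = .seq s₁ s₂ →
      ∃ t', t' ≤ t ∧ TypS Γ Δ τin τout s₁ t' ∧ TypS Γ Δ τin τout s₂ t' := by
  induction h with
  | sub _ _ _ _ _ _ hle ih =>
    intro s₁ s₂ hs
    obtain ⟨t', h1, h2, h3⟩ := ih s₁ s₂ hs
    exact ⟨t', le_trans h1 hle, h2, h3⟩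
  | seq _ _ _ _ τ h1 h2 _ _ =>
    intro s₁ s₂ hs
    cases hs
    exact ⟨τ, le_rfl, h1, h2⟩
  | skip _ _ => intro _ _ hs; cases hs
  | assign _ _ _ _ _ _ _ => intro _ _ hs; cases hs
  | cond _ _ _ _ _ _ _ _ _ _ _ => intro _ _ hs; cases hs
  | whileNested _ _ _ _ _ _ _ _ _ _ => intro _ _ hs; cases hs
  | whileInit _ _ _ _ _ _ _ => intro _ _ hs; cases hs
  | brk _ _ _ _ _ _ => intro _ _ hs; cases hs

lemma typS_ite_inv {τin τout t : ℕ} {s : Stmt O} (h : TypS Γ Δ τin τout s t) :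
    ∀ e s₁ s₀, s = .ite e s₁ s₀ →
      ∃ t', t' ≤ t ∧ TypE Γ Δ τin τout e t' ∧
        TypS Γ Δ τin τout s₁ t' ∧ TypS Γ Δ τin τout s₀ t' := by
  induction h with
  | sub _ _ _ _ _ _ hle ih =>
    intro e s₁ s₀ hs
    obtain ⟨t', h1, h2, h3, h4⟩ := ih e s₁ s₀ hs
    exact ⟨t', le_trans h1 hle, h2, h3, h4⟩
  | cond _ _ _ _ _ τ hE h1 h0 _ _ =>
    intro e s₁ s₀ hs
    cases hs
    exact ⟨τ, le_rfl, hE, h1, h0⟩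
  | skip _ _ => intro _ _ _ hs; cases hs
  | assign _ _ _ _ _ _ _ => intro _ _ _ hs; cases hs
  | seq _ _ _ _ _ _ _ _ _ => intro _ _ _ hs; cases hs
  | whileNested _ _ _ _ _ _ _ _ _ _ => intro _ _ _ hs; cases hs
  | whileInit _ _ _ _ _ _ _ => intro _ _ _ hs; cases hs
  | brk _ _ _ _ _ _ => intro _ _ _ hs; cases hs

lemma typS_while_inv {τin τout t : ℕ} {st : Stmt O} (h : TypS Γ Δ τin τout st t) :
    ∀ e s, st = .whileLoop e s →
      ∃ τ', 1 ≤ τ' ∧ τ' ≤ t ∧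
        ((τ' ≤ τout ∧ TypE Γ Δ τ' τout e τ' ∧ TypS Γ Δ τ' τout s τ') ∨
         (τin = 0 ∧ τout = 0 ∧ TypE Γ Δ τ' τ' e τ' ∧ TypS Γ Δ τ' τ' s τ')) := by
  induction h with
  | sub _ _ _ _ _ _ hle ih =>
    intro e s hs
    obtain ⟨τ', h1, h2, h3⟩ := ih e s hs
    exact ⟨τ', h1, le_trans h2 hle, h3⟩
  | whileNested _ _ _ _ τ' hE hS h1 hle _ =>
    intro e s hs
    cases hs
    exact ⟨τ', h1, le_rfl, Or.inl ⟨hle, hE, hS⟩⟩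
  | whileInit _ _ τ' hE hS h1 _ =>
    intro e s hs
    cases hs
    exact ⟨τ', h1, le_rfl, Or.inr ⟨rfl, rfl, hE, hS⟩⟩
  | skip _ _ => intro _ _ hs; cases hs
  | assign _ _ _ _ _ _ _ => intro _ _ hs; cases hs
  | seq _ _ _ _ _ _ _ _ _ => intro _ _ hs; cases hs
  | cond _ _ _ _ _ _ _ _ _ _ _ => intro _ _ hs; cases hs
  | brk _ _ _ _ _ _ => intro _ _ hs; cases hs

end Inversion

section ConsTop

variable {σ : Type} {O : OpSig σ} [Fintype σ] [DecidableEq σ]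
variable {zero one : σ} {Γ : ℕ → ℕ} {Δ : OpEnv O} {X : Finset ℕ}

/-- Top-level length bound for expressions: polynomial in the size of the store. -/
lemma exprSizeTop {Qop : O.Op → Polynomial ℕ}
    (hQop : ∀ (o : O.Op) ws, (O.sem o ws).length ≤ (Qop o).eval (maxSize ws))
    {μ : Store σ} {e : Expr O} {w : Word σ} (hE : EvalE one μ e w) :
    exprVars e ⊆ X → w.length ≤ (qExpr Qop e).eval (lvlSize Γ X 0 μ) := by
  induction hE with
  | var x =>
    intro hX
    simpa [qExpr] using length_le_lvlSize (hX (by simp [exprVars])) (Nat.zero_le _)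
  | op o es ws hargs ih =>
    intro hX
    have hmax : maxSize ws ≤ (∑ i, qExpr Qop (es i)).eval (lvlSize Γ X 0 μ) := by
      refine Finset.sup_le fun i _ => ?_
      refine le_trans (ih i ((exprVars_op_subset i).trans hX)) ?_
      rw [Polynomial.eval_finset_sum]
      exact Finset.single_le_sum (f := fun i => (qExpr Qop (es i)).eval (lvlSize Γ X 0 μ))
        (fun j _ => Nat.zero_le _) (Finset.mem_univ i)
    calc (O.sem o ws).length ≤ (Qop o).eval (maxSize ws) := hQop o ws
      _ ≤ (Qop o).eval ((∑ i, qExpr Qop (es i)).eval (lvlSize Γ X 0 μ)) :=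
          peval_mono _ hmax
      _ = (qExpr Qop (.op o es)).eval (lvlSize Γ X 0 μ) := by
          rw [qExpr, Polynomial.eval_comp]
  | declass e₁ e₂ w₁ w₂ h₁ h₂ ih₁ ih₂ =>
    intro hX
    have hX₁ : exprVars e₁ ⊆ X := fun y hy =>
      hX (by simp only [exprVars, Finset.mem_union]; exact Or.inl hy)
    rw [qExpr] at *
    rw [List.length_replicate]
    exact le_trans (min_le_left _ _) (ih₁ hX₁)

/-- Value conservation for statements inside a loop: variables of level `≥ ℓ`
keep values inside a subword-closed bounded set `V`. -/
lemma stmtCons (hΔ : SafeOpEnv zero one Δ) {V : Set (Word σ)} {L : ℕ}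
    (hsub : ∀ ⦃v w⦄, w ∈ V → v <:+: w → v ∈ V) (hz : [zero] ∈ V) (hone : [one] ∈ V)
    (hun : ∀ k ≤ L, List.replicate k one ∈ V) (hbd : ∀ w ∈ V, w.length ≤ L)
    {ℓ : ℕ} {μ : Store σ} {s : Stmt O} {r : Bool × Store σ} (hE : EvalS one μ s r) :
    ∀ {τin τout t : ℕ}, TypS Γ Δ τin τout s t → 1 ≤ τin → τin ≤ ℓ → t ≤ ℓ → 1 ≤ τout →
      stmtVars s ⊆ X → (∀ x ∈ X, ℓ ≤ Γ x → μ x ∈ V) →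
      ∀ x ∈ X, ℓ ≤ Γ x → r.2 x ∈ V := by
  induction hE with
  | skip _ =>
    intro τin τout t h h1 h2 h3 h4 hX hmem
    exact hmem
  | assign _ x e w hEe =>
    intro τin τout t h h1 h2 h3 h4 hX hmem
    obtain ⟨τ₂, hTe, hc, hΓx⟩ := typS_assign_inv h x e rfl
    intro y hy hℓy
    rcases eq_or_ne y x with rfl | hne
    · have hΓτ₂ : Γ y ≤ τ₂ := by
        rcases hc with h0 | h0
        · omega
        · exact h0
      have hXe : exprVars e ⊆ X := fun z hz' =>
        hX (by simp only [stmtVars, Finset.mem_insert]; exact Or.inr hz')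
      have hw : w ∈ V :=
        exprCons hΔ hsub hz hone hun hbd hEe hTe h1 h2 (le_trans hℓy hΓτ₂) h4 hXe hmem
      simpa [Function.update_self] using hw
    · simpa [Function.update_of_ne hne] using hmem y hy hℓy
  | seq_top _ _ r' s₁ s₂ _ _ ih₁ ih₂ =>
    intro τin τout t h h1 h2 h3 h4 hX hmem
    obtain ⟨t', hle, hT₁, hT₂⟩ := typS_seq_inv h s₁ s₂ rfl
    have hX₁ : stmtVars s₁ ⊆ X :=
      (Finset.union_subset_iff.mp (by simpa [stmtVars] using hX)).1
    have hX₂ : stmtVars s₂ ⊆ X :=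
      (Finset.union_subset_iff.mp (by simpa [stmtVars] using hX)).2
    exact ih₂ hT₂ h1 h2 (le_trans hle h3) h4 hX₂
      (ih₁ hT₁ h1 h2 (le_trans hle h3) h4 hX₁ hmem)
  | seq_brk _ _ s₁ s₂ _ ih₁ =>
    intro τin τout t h h1 h2 h3 h4 hX hmem
    obtain ⟨t', hle, hT₁, hT₂⟩ := typS_seq_inv h s₁ s₂ rfl
    have hX₁ : stmtVars s₁ ⊆ X :=
      (Finset.union_subset_iff.mp (by simpa [stmtVars] using hX)).1
    exact ih₁ hT₁ h1 h2 (le_trans hle h3) h4 hX₁ hmem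
  | ite_true _ e s₁ s₀ r' _ _ ih =>
    intro τin τout t h h1 h2 h3 h4 hX hmem
    obtain ⟨t', hle, hTe, hT₁, hT₀⟩ := typS_ite_inv h e s₁ s₀ rfl
    have hX₁ : stmtVars s₁ ⊆ X := by
      intro z hz'
      exact hX (by simp only [stmtVars, Finset.mem_union]; exact Or.inr (Or.inl hz'))
    exact ih hT₁ h1 h2 (le_trans hle h3) h4 hX₁ hmem
  | ite_false _ e s₁ s₀ _ r' _ _ _ ih =>
    intro τin τout t h h1 h2 h3 h4 hX hmem
    obtain ⟨t', hle, hTe, hT₁, hT₀⟩ := typS_ite_inv h e s₁ s₀ rfl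
    have hX₀ : stmtVars s₀ ⊆ X := by
      intro z hz'
      exact hX (by simp only [stmtVars, Finset.mem_union]; exact Or.inr (Or.inr hz'))
    exact ih hT₀ h1 h2 (le_trans hle h3) h4 hX₀ hmem
  | while_false _ _ _ _ _ _ =>
    intro τin τout t h h1 h2 h3 h4 hX hmem
    exact hmem
  | while_true _ _ e s _ _ _ ih =>
    intro τin τout t h h1 h2 h3 h4 hX hmem
    obtain ⟨τ', hτ'1, hτ't, hcase⟩ := typS_while_inv h e s rfl
    rcases hcase with ⟨hle, hTe, hTs⟩ | ⟨rfl, -, -, -⟩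
    · have hseqT : TypS Γ Δ τ' τout (.seq s (.whileLoop e s)) τ' :=
        .seq _ _ _ _ τ' hTs (.whileNested τ' τout e s τ' hTe hTs hτ'1 hle)
      have hXw : stmtVars (Stmt.seq s (.whileLoop e s)) ⊆ X := by
        intro z hz'
        simp only [stmtVars, Finset.mem_union] at hz' ⊢
        rcases hz' with hz' | hz'
        · exact hX (by simp only [stmtVars, Finset.mem_union]; exact Or.inr hz')
        · exact hX (by simpa [stmtVars] using hz')
      exact ih hseqT hτ'1 (le_trans (le_trans hτ't h3) le_rfl) (le_trans hτ't h3) h4 hXw hmem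
    · omega
  | brk_false _ _ _ _ _ =>
    intro τin τout t h h1 h2 h3 h4 hX hmem
    exact hmem
  | brk_true _ _ _ =>
    intro τin τout t h h1 h2 h3 h4 hX hmem
    exact hmem

end ConsTop

section LoopHelpers

variable {σ : Type} {O : OpSig σ}

lemma noRepeat_mono {one : σ} {c c' : Store σ × Stmt O}
    (h : Relation.ReflTransGen (SubConf one) c c') (hnr : NoRepeat one c.2 c.1) :
    NoRepeat one c'.2 c'.1 := by
  rintro ⟨e, s, μ', μ'', h1, h2, h3⟩
  exact hnr ⟨e, s, μ', μ'', Relation.ReflTransGen.trans h h1, h2, h3⟩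

/-- The polynomial `(c·(X+2)² + X + 5)^u` bounding the number of admissible
restriction tuples of a loop guard. -/
noncomputable def apPoly (c u : ℕ) : Polynomial ℕ :=
  (Polynomial.C c * (Polynomial.X + 2) ^ 2 + Polynomial.X + 5) ^ u

lemma apPoly_eval (c u t : ℕ) : (apPoly c u).eval t = (c * (t + 2) ^ 2 + t + 5) ^ u := by
  simp [apPoly]

/-- Iterated polynomial bound for the level-indexed size recursion. -/
noncomputable def ppPoly (ap F : Polynomial ℕ) : ℕ → Polynomial ℕ :=
  fun d => Nat.rec (Polynomial.X + 1) (fun _ acc => Polynomial.X + 1 + ap * F.comp acc) d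

lemma ppPoly_zero (ap F : Polynomial ℕ) : ppPoly ap F 0 = Polynomial.X + 1 := rfl

lemma ppPoly_succ (ap F : Polynomial ℕ) (d : ℕ) :
    ppPoly ap F (d + 1) = Polynomial.X + 1 + ap * F.comp (ppPoly ap F d) := rfl

noncomputable def spPoly (ap F : Polynomial ℕ) (τ : ℕ) : Polynomial ℕ :=
  ∑ d ∈ Finset.range (τ + 1), ppPoly ap F d

lemma pp_le_sp {ap F : Polynomial ℕ} {τ d : ℕ} (hd : d ≤ τ) (t : ℕ) :
    (ppPoly ap F d).eval t ≤ (spPoly ap F τ).eval t := by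
  rw [spPoly, Polynomial.eval_finset_sum]
  exact Finset.single_le_sum (f := fun d => (ppPoly ap F d).eval t)
    (fun j _ => Nat.zero_le _) (Finset.mem_range.mpr (by omega))

/-- Level-indexed size bound inside a loop of level `τ`. -/
def loopBB (Lf : ℕ → ℕ) (A : ℕ) (F : Polynomial ℕ) (τ : ℕ) (ℓ : ℕ) : ℕ :=
  if τ ≤ ℓ then Lf ℓ
  else Nat.rec (Lf τ) (fun d' acc => Lf (τ - (d' + 1)) + A * F.eval acc) (τ - ℓ)

lemma loopBB_ge {Lf : ℕ → ℕ} {A : ℕ} {F : Polynomial ℕ} {τ ℓ : ℕ} (h : τ ≤ ℓ) :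
    loopBB Lf A F τ ℓ = Lf ℓ := if_pos h

lemma loopBB_lt {Lf : ℕ → ℕ} {A : ℕ} {F : Polynomial ℕ} {τ ℓ : ℕ} (h : ℓ < τ) :
    loopBB Lf A F τ ℓ = Lf ℓ + A * F.eval (loopBB Lf A F τ (ℓ + 1)) := by
  rw [loopBB, if_neg (by omega)]
  obtain ⟨d, hd⟩ : ∃ d, τ - ℓ = d + 1 := ⟨τ - ℓ - 1, by omega⟩
  rw [hd]
  show Lf (τ - (d + 1)) + A * F.eval (Nat.rec (Lf τ) _ d) = _
  rw [show τ - (d + 1) = ℓ by omega]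
  congr 1
  rw [loopBB]
  by_cases hc : τ ≤ ℓ + 1
  · rw [if_pos hc]
    have hd0 : d = 0 := by omega
    subst hd0
    show A * F.eval (Lf τ) = A * F.eval (Lf (ℓ + 1))
    rw [show τ = ℓ + 1 by omega]
  · rw [if_neg hc, show τ - (ℓ + 1) = d by omega]

lemma loopBB_le {m : ℕ → ℕ} (hm : ∀ {a b : ℕ}, a ≤ b → m b ≤ m a)
    {A : ℕ} {ap F : Polynomial ℕ} {τ : ℕ} (hA : A ≤ ap.eval (m τ)) :
    ∀ d ℓ, ℓ ≤ τ → τ - ℓ = d →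
      loopBB (fun ℓ => max (m ℓ) 1) A F τ ℓ ≤ (ppPoly ap F d).eval (m ℓ) := by
  intro d
  induction d with
  | zero =>
    intro ℓ h1 h2
    have hℓτ : ℓ = τ := by omega
    subst hℓτ
    rw [loopBB_ge le_rfl, ppPoly_zero]
    simp only [Polynomial.eval_add, Polynomial.eval_X, Polynomial.eval_one]
    omega
  | succ d ihd =>
    intro ℓ h1 h2
    have hℓτ : ℓ < τ := by omega
    rw [loopBB_lt hℓτ, ppPoly_succ]
    simp only [Polynomial.eval_add, Polynomial.eval_X, Polynomial.eval_one,
      Polynomial.eval_mul, Polynomial.eval_comp]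
    have hstep : loopBB (fun ℓ => max (m ℓ) 1) A F τ (ℓ + 1) ≤ (ppPoly ap F d).eval (m ℓ) := by
      refine le_trans (ihd (ℓ + 1) (by omega) (by omega)) ?_
      exact peval_mono _ (hm (by omega))
    have h3 : A * F.eval (loopBB (fun ℓ => max (m ℓ) 1) A F τ (ℓ + 1)) ≤
        ap.eval (m ℓ) * F.eval ((ppPoly ap F d).eval (m ℓ)) :=
      Nat.mul_le_mul (le_trans hA (peval_mono _ (hm hℓτ.le))) (peval_mono _ hstep)
    have h4 : max (m ℓ) 1 ≤ m ℓ + 1 := by omega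
    omega

end LoopHelpers

section ConsSets

variable {σ : Type} {O : OpSig σ}

/-- The set of values available to high variables during a loop started at store `ν`. -/
def consSet (zero one : σ) (Γ : ℕ → ℕ) (X : Finset ℕ) (ν : Store σ) (ℓ : ℕ) :
    Set (Word σ) :=
  {w | (∃ x ∈ X, ℓ ≤ Γ x ∧ w <:+: ν x) ∨ w = [zero] ∨ w = [one] ∨
    ∃ k ≤ max (lvlSize Γ X ℓ ν) 1, w = List.replicate k one}

variable {zero one : σ} {Γ : ℕ → ℕ} {X : Finset ℕ} {ν : Store σ} {ℓ : ℕ}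

lemma consSet_zero : [zero] ∈ consSet zero one Γ X ν ℓ := Or.inr (Or.inl rfl)

lemma consSet_one : [one] ∈ consSet zero one Γ X ν ℓ := Or.inr (Or.inr (Or.inl rfl))

lemma consSet_unary {k : ℕ} (hk : k ≤ max (lvlSize Γ X ℓ ν) 1) :
    List.replicate k one ∈ consSet zero one Γ X ν ℓ :=
  Or.inr (Or.inr (Or.inr ⟨k, hk, rfl⟩))

lemma consSet_bd {w : Word σ} (hw : w ∈ consSet zero one Γ X ν ℓ) :
    w.length ≤ max (lvlSize Γ X ℓ ν) 1 := by
  rcases hw with ⟨x, hx, hℓx, hinf⟩ | rfl | rfl | ⟨k, hk, rfl⟩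
  · exact le_trans hinf.length_le (le_trans (length_le_lvlSize hx hℓx) (le_max_left _ _))
  · exact le_max_right _ _
  · exact le_max_right _ _
  · simpa using hk

lemma consSet_sub {v w : Word σ} (hw : w ∈ consSet zero one Γ X ν ℓ) (hvw : v <:+: w) :
    v ∈ consSet zero one Γ X ν ℓ := by
  rcases hw with ⟨x, hx, hℓx, hinf⟩ | rfl | rfl | ⟨k, hk, rfl⟩
  · exact Or.inl ⟨x, hx, hℓx, hvw.trans hinf⟩
  · rcases infix_singleton hvw with rfl | rfl
    · exact Or.inr (Or.inr (Or.inr ⟨0, Nat.zero_le _, by simp⟩))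
    · exact consSet_zero
  · rcases infix_singleton hvw with rfl | rfl
    · exact Or.inr (Or.inr (Or.inr ⟨0, Nat.zero_le _, by simp⟩))
    · exact consSet_one
  · obtain ⟨hrep, hlen⟩ := infix_replicate hvw
    exact Or.inr (Or.inr (Or.inr ⟨v.length, le_trans hlen hk, hrep⟩))

lemma consSet_init {x : ℕ} (hx : x ∈ X) (hℓx : ℓ ≤ Γ x) :
    ν x ∈ consSet zero one Γ X ν ℓ :=
  Or.inl ⟨x, hx, hℓx, List.infix_refl _⟩

lemma lvlSize_le_of_consSet {μ : Store σ}
    (h : ∀ x ∈ X, ℓ ≤ Γ x → μ x ∈ consSet zero one Γ X ν ℓ) :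
    lvlSize Γ X ℓ μ ≤ max (lvlSize Γ X ℓ ν) 1 := by
  refine Finset.sup_le fun x hx => ?_
  rcases Finset.mem_filter.mp hx with ⟨hxX, hℓx⟩
  exact consSet_bd (h x hxX hℓx)

/-- Finite version of `consSet` at the loop level `τ`. -/
def consFin (zero one : σ) [DecidableEq σ] (Γ : ℕ → ℕ) (X : Finset ℕ) (ν : Store σ)
    (τ : ℕ) : Finset (Word σ) :=
  ((X.filter fun x => τ ≤ Γ x).biUnion fun x => infixesF (ν x)) ∪
    ({[], [zero], [one]} : Finset (Word σ)) ∪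
    (Finset.range (max (lvlSize Γ X τ ν) 1 + 1)).image fun k => List.replicate k one

lemma consSet_subset_consFin [DecidableEq σ] {τ : ℕ} {w : Word σ}
    (hw : w ∈ consSet zero one Γ X ν τ) : w ∈ consFin zero one Γ X ν τ := by
  rcases hw with ⟨x, hx, hℓx, hinf⟩ | rfl | rfl | ⟨k, hk, rfl⟩
  · refine Finset.mem_union_left _ (Finset.mem_union_left _ ?_)
    exact Finset.mem_biUnion.mpr ⟨x, Finset.mem_filter.mpr ⟨hx, hℓx⟩, mem_infixesF.mpr hinf⟩
  · exact Finset.mem_union_left _ (Finset.mem_union_right _ (by simp))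
  · exact Finset.mem_union_left _ (Finset.mem_union_right _ (by simp))
  · exact Finset.mem_union_right _
      (Finset.mem_image.mpr ⟨k, Finset.mem_range.mpr (by omega), rfl⟩)

lemma card_consFin [DecidableEq σ] {τ : ℕ} :
    (consFin zero one Γ X ν τ).card ≤
      X.card * (lvlSize Γ X τ ν + 2) ^ 2 + lvlSize Γ X τ ν + 5 := by
  set L := lvlSize Γ X τ ν with hL
  have h1 : ((X.filter fun x => τ ≤ Γ x).biUnion fun x => infixesF (ν x)).card ≤
      X.card * (L + 1) * (L + 1) := by
    refine le_trans (Finset.card_biUnion_le) ?_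
    refine le_trans (Finset.sum_le_card_nsmul _ _ ((L + 1) * (L + 1)) ?_) ?_
    · intro x hx
      rcases Finset.mem_filter.mp hx with ⟨hxX, hτx⟩
      refine le_trans (card_infixesF (ν x)) ?_
      have := length_le_lvlSize (Γ := Γ) (μ := ν) hxX hτx
      exact Nat.mul_le_mul (by omega) (by omega)
    · have : (X.filter fun x => τ ≤ Γ x).card ≤ X.card :=
        Finset.card_le_card (Finset.filter_subset _ _)
      simp only [smul_eq_mul]
      calc (X.filter fun x => τ ≤ Γ x).card * ((L + 1) * (L + 1)) ≤
            X.card * ((L + 1) * (L + 1)) := Nat.mul_le_mul_right _ this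
        _ = X.card * (L + 1) * (L + 1) := by ring
  have h2 : ({[], [zero], [one]} : Finset (Word σ)).card ≤ 3 := Finset.card_le_three ..
  have h3 : ((Finset.range (max L 1 + 1)).image fun k => List.replicate k one).card ≤
      max L 1 + 1 := by
    refine le_trans Finset.card_image_le ?_
    simp
  have h4 : max L 1 ≤ L + 1 := by omega
  refine le_trans (Finset.card_union_le _ _) ?_
  refine le_trans (add_le_add (Finset.card_union_le _ _) le_rfl) ?_
  have hsq : X.card * (L + 1) * (L + 1) ≤ X.card * (L + 2) ^ 2 := by nlinarith
  simp only [← hL]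
  omega

end ConsSets

section LoopLem

variable {σ : Type} {O : OpSig σ} [Fintype σ] [DecidableEq σ]
variable {zero one : σ} {Γ : ℕ → ℕ} {Δ : OpEnv O} {X : Finset ℕ}

/-- Main lemma for loops: termination, cost, and growth bounds for a well-typed
aperiodic while loop, given bounds for its body. -/
lemma loopLem (hΔ : SafeOpEnv zero one Δ) {τ τout : ℕ} {e : Expr O} {s : Stmt O}
    (hτ : 1 ≤ τ) (hττ : τ ≤ τout)
    (De : TypE Γ Δ τ τout e τ) (Ds : TypS Γ Δ τ τout s τ)
    (hXe : exprVars e ⊆ X) (hXs : stmtVars s ⊆ X)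
    (Fcb Fgb : Polynomial ℕ)
    (IHb : ∀ μ, NoRepeat one s μ → ∃ b μ' N, EvalSN one μ s (b, μ') N ∧
        N ≤ Fcb.eval (lvlSize Γ X 1 μ) ∧
        ∀ ℓ, lvlSize Γ X ℓ μ' ≤ max (lvlSize Γ X ℓ μ) 1 + Fgb.eval (lvlSize Γ X (ℓ+1) μ)) :
    ∃ Fc Fg : Polynomial ℕ, ∀ ν, NoRepeat one (Stmt.whileLoop e s) ν →
      ∃ μ' N, EvalSN one ν (.whileLoop e s) (true, μ') N ∧
        N ≤ Fc.eval (lvlSize Γ X 1 ν) ∧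
        ∀ ℓ, lvlSize Γ X ℓ μ' ≤ max (lvlSize Γ X ℓ ν) 1 + Fg.eval (lvlSize Γ X (ℓ+1) ν) := by
  classical
  set u := (undeclF e).card with hu
  set AP : Polynomial ℕ := apPoly X.card u with hAPdef
  set SP : Polynomial ℕ := spPoly AP Fgb τ with hSPdef
  refine ⟨Polynomial.C 1 + (AP + 1) * (Polynomial.C (2 + esize e) + Fcb.comp SP),
    AP * Fgb.comp SP, ?_⟩
  intro ν hNR
  set AF : Finset (↥(undeclF e) → Word σ) :=
    Fintype.piFinset fun _ => consFin zero one Γ X ν τ with hAFdef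
  set A : ℕ := AF.card with hAdef
  set Bf : ℕ → ℕ := loopBB (fun ℓ => max (lvlSize Γ X ℓ ν) 1) A Fgb τ with hBfdef
  set CC : ℕ := 2 + esize e + Fcb.eval (Bf 1) with hCCdef
  have hτout1 : 1 ≤ τout := le_trans hτ hττ
  -- upper bound on all levels from the invariants
  have hBub : ∀ (j : ℕ) (μc : Store σ), j ≤ A →
      (∀ ℓ, τ ≤ ℓ → ∀ x ∈ X, ℓ ≤ Γ x → μc x ∈ consSet zero one Γ X ν ℓ) →
      (∀ ℓ, ℓ < τ → lvlSize Γ X ℓ μc ≤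
        max (lvlSize Γ X ℓ ν) 1 + j * Fgb.eval (Bf (ℓ+1))) →
      ∀ ℓ, lvlSize Γ X ℓ μc ≤ Bf ℓ := by
    intro j μc hj hMem hGrow ℓ
    by_cases hcase : τ ≤ ℓ
    · rw [hBfdef, loopBB_ge hcase]
      exact lvlSize_le_of_consSet (hMem ℓ hcase)
    · rw [hBfdef, loopBB_lt (by omega)]
      have h1 := hGrow ℓ (by omega)
      have h2 : j * Fgb.eval (Bf (ℓ+1)) ≤ A * Fgb.eval (Bf (ℓ+1)) :=
        Nat.mul_le_mul_right _ hj
      rw [hBfdef] at h1 h2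
      omega
  have PSI : ∀ k : ℕ, ∀ (μc : Store σ) (seen : Finset (↥(undeclF e) → Word σ)),
      (AF \ seen).card ≤ k → seen ⊆ AF →
      (∀ r ∈ seen, ∃ μp : Store σ, (fun x : ↥(undeclF e) => μp ↑x) = r ∧
        Relation.ReflTransGen (SubConf one) (ν, Stmt.whileLoop e s) (μp, .whileLoop e s) ∧
        Relation.TransGen (SubConf one) (μp, .whileLoop e s) (μc, .whileLoop e s)) →
      Relation.ReflTransGen (SubConf one) (ν, .whileLoop e s) (μc, .whileLoop e s) →
      (∀ ℓ, τ ≤ ℓ → ∀ x ∈ X, ℓ ≤ Γ x → μc x ∈ consSet zero one Γ X ν ℓ) →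
      (∀ ℓ, ℓ < τ → lvlSize Γ X ℓ μc ≤
        max (lvlSize Γ X ℓ ν) 1 + seen.card * Fgb.eval (Bf (ℓ+1))) →
      ∃ μ' N, EvalSN one μc (.whileLoop e s) (true, μ') N ∧ N ≤ 1 + (k+1) * CC ∧
        (∀ ℓ, τ ≤ ℓ → ∀ x ∈ X, ℓ ≤ Γ x → μ' x ∈ consSet zero one Γ X ν ℓ) ∧
        (∀ ℓ, ℓ < τ → lvlSize Γ X ℓ μ' ≤
          max (lvlSize Γ X ℓ ν) 1 + A * Fgb.eval (Bf (ℓ+1))) := by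
    intro k
    induction k using Nat.strong_induction_on with
    | _ k IHk =>
    intro μc seen hcard hseenA hwit hreach hMem hGrow
    obtain ⟨w, hw⟩ := exprTotal one μc e
    by_cases hwone : w = [one]
    · subst hwone
      have hwE : EvalE one μc e [one] := hw.toEvalE
      have hseenle : seen.card ≤ A := Finset.card_le_card hseenA
      have hrcA : (fun x : ↥(undeclF e) => μc ↑x) ∈ AF := by
        rw [hAFdef, Fintype.mem_piFinset]
        intro i
        have hiX : (i : ℕ) ∈ X := hXe (undeclF_subset e i.2)
        have hiΓ : τ ≤ Γ ↑i := undecl_level hΔ De hτout1 ↑i i.2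
        exact consSet_subset_consFin (hMem τ le_rfl ↑i hiX hiΓ)
      have hrcS : (fun x : ↥(undeclF e) => μc ↑x) ∉ seen := by
        intro hin
        obtain ⟨μp, hrp, hrtg, htg⟩ := hwit _ hin
        refine hNR ⟨e, s, μp, μc, hrtg, htg, ?_⟩
        intro x hx
        rw [undecl_eq_undeclF, Finset.mem_coe] at hx
        exact congrFun hrp (⟨x, hx⟩ : ↥(undeclF e))
      have hk1 : 1 ≤ k := by
        have hmem' : (fun x : ↥(undeclF e) => μc ↑x) ∈ AF \ seen :=
          Finset.mem_sdiff.mpr ⟨hrcA, hrcS⟩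
        have := Finset.card_pos.mpr ⟨_, hmem'⟩
        omega
      have hNRs : NoRepeat one s μc := by
        have hpath : Relation.ReflTransGen (SubConf one) (ν, Stmt.whileLoop e s) (μc, s) :=
          Relation.ReflTransGen.trans hreach
            (Relation.ReflTransGen.head (.while_true _ _ _ hwE)
              (Relation.ReflTransGen.single (.seq_left _ _ _)))
        exact noRepeat_mono hpath hNR
      obtain ⟨b'', μ'', Nb, hEb, hNbc, hGb⟩ := IHb μc hNRs
      have hMem'' : ∀ ℓ, τ ≤ ℓ → ∀ x ∈ X, ℓ ≤ Γ x →
          μ'' x ∈ consSet zero one Γ X ν ℓ := by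
        intro ℓ hτℓ
        exact stmtCons hΔ (fun v w hw' hv => consSet_sub hw' hv) consSet_zero consSet_one
          (fun k' hk' => consSet_unary hk') (fun w' hw' => consSet_bd hw')
          hEb.toEvalS Ds hτ hτℓ hτℓ hτout1 hXs (hMem ℓ hτℓ)
      have hBub'' : ∀ ℓ, lvlSize Γ X ℓ μc ≤ Bf ℓ := hBub seen.card μc hseenle hMem hGrow
      have hNb : Nb ≤ Fcb.eval (Bf 1) := le_trans hNbc (peval_mono _ (hBub'' 1))
      have hGrow'' : ∀ ℓ, ℓ < τ → lvlSize Γ X ℓ μ'' ≤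
          max (lvlSize Γ X ℓ ν) 1 + (seen.card + 1) * Fgb.eval (Bf (ℓ+1)) := by
        intro ℓ hℓτ
        have h1 := hGb ℓ
        have h4 : Fgb.eval (lvlSize Γ X (ℓ+1) μc) ≤ Fgb.eval (Bf (ℓ+1)) :=
          peval_mono _ (hBub'' (ℓ+1))
        have h3 := hGrow ℓ hℓτ
        have h5 : 1 ≤ max (lvlSize Γ X ℓ ν) 1 := le_max_right _ _
        have h6 : (seen.card + 1) * Fgb.eval (Bf (ℓ+1)) =
            seen.card * Fgb.eval (Bf (ℓ+1)) + Fgb.eval (Bf (ℓ+1)) := by ring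
        have h7 : max (lvlSize Γ X ℓ μc) 1 ≤
            max (lvlSize Γ X ℓ ν) 1 + seen.card * Fgb.eval (Bf (ℓ+1)) :=
          max_le h3 (by omega)
        omega
      have hsub2 : insert (fun x : ↥(undeclF e) => μc ↑x) seen ⊆ AF :=
        Finset.insert_subset hrcA hseenA
      have hseen1A : seen.card + 1 ≤ A := by
        have e3 := Finset.card_insert_of_notMem hrcS
        have := Finset.card_le_card hsub2
        omega
      cases b'' with
      | false =>
        refine ⟨μ'', 1 + esize e + (1 + Nb),
          .while_true _ _ _ _ _ _ _ hw (.seq_brk _ _ _ _ _ hEb), ?_, hMem'', ?_⟩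
        · have hCCle : CC ≤ (k+1) * CC := Nat.le_mul_of_pos_left _ (by omega)
          omega
        · intro ℓ hℓ
          have := hGrow'' ℓ hℓ
          have hmul : (seen.card + 1) * Fgb.eval (Bf (ℓ+1)) ≤ A * Fgb.eval (Bf (ℓ+1)) :=
            Nat.mul_le_mul_right _ hseen1A
          omega
      | true =>
        have hEbS : EvalS one μc s (true, μ'') := hEb.toEvalS
        have hstep : Relation.TransGen (SubConf one)
            (μc, Stmt.whileLoop e s) (μ'', Stmt.whileLoop e s) :=
          Relation.TransGen.tail (Relation.TransGen.single (.while_true _ _ _ hwE))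
            (.seq_right _ _ _ _ hEbS)
        have hreach'' : Relation.ReflTransGen (SubConf one)
            (ν, Stmt.whileLoop e s) (μ'', .whileLoop e s) :=
          hreach.trans hstep.to_reflTransGen
        have hwit'' : ∀ r ∈ insert (fun x : ↥(undeclF e) => μc ↑x) seen,
            ∃ μp : Store σ, (fun x : ↥(undeclF e) => μp ↑x) = r ∧
            Relation.ReflTransGen (SubConf one) (ν, Stmt.whileLoop e s)
              (μp, .whileLoop e s) ∧
            Relation.TransGen (SubConf one) (μp, .whileLoop e s)
              (μ'', .whileLoop e s) := by
          intro r hr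
          rcases Finset.mem_insert.mp hr with rfl | hr
          · exact ⟨μc, rfl, hreach, hstep⟩
          · obtain ⟨μp, h1', h2', h3'⟩ := hwit r hr
            exact ⟨μp, h1', h2', h3'.trans hstep⟩
        have hcard'' : (AF \ insert (fun x : ↥(undeclF e) => μc ↑x) seen).card ≤ k - 1 := by
          have e1 : (AF \ seen).card = A - seen.card := Finset.card_sdiff_of_subset hseenA
          have e2 : (AF \ insert (fun x : ↥(undeclF e) => μc ↑x) seen).card =
              A - (insert (fun x : ↥(undeclF e) => μc ↑x) seen).card :=
            Finset.card_sdiff_of_subset hsub2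
          have e3 := Finset.card_insert_of_notMem hrcS
          omega
        have hGrowSeen'' : ∀ ℓ, ℓ < τ → lvlSize Γ X ℓ μ'' ≤
            max (lvlSize Γ X ℓ ν) 1 +
              (insert (fun x : ↥(undeclF e) => μc ↑x) seen).card *
                Fgb.eval (Bf (ℓ+1)) := by
          intro ℓ hℓ
          rw [Finset.card_insert_of_notMem hrcS]
          exact hGrow'' ℓ hℓ
        obtain ⟨μ', N', hE', hN', hM', hG'⟩ := IHk (k-1) (by omega) μ''
          (insert (fun x : ↥(undeclF e) => μc ↑x) seen) hcard'' hsub2 hwit'' hreach''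
          hMem'' hGrowSeen''
        refine ⟨μ', 1 + esize e + (1 + Nb + N'),
          .while_true _ _ _ _ _ _ _ hw (.seq_top _ _ _ _ _ _ _ hEb hE'), ?_, hM', hG'⟩
        have hk' : k - 1 + 1 = k := by omega
        rw [hk'] at hN'
        have hCCexp : (k+1) * CC = k * CC + CC := by ring
        omega
    · refine ⟨μc, 1 + esize e, .while_false _ _ _ _ _ hw hwone, ?_, hMem, ?_⟩
      · have hCCle : CC ≤ (k+1) * CC := Nat.le_mul_of_pos_left _ (by omega)
        omega
      · intro ℓ hℓ
        have := hGrow ℓ hℓ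
        have hseenle : seen.card ≤ A := Finset.card_le_card hseenA
        have hmul : seen.card * Fgb.eval (Bf (ℓ+1)) ≤ A * Fgb.eval (Bf (ℓ+1)) :=
          Nat.mul_le_mul_right _ hseenle
        omega
  -- apply PSI with the full budget
  obtain ⟨μ', N, hE, hN, hM', hG'⟩ := PSI A ν ∅
    (by rw [Finset.sdiff_empty]) (Finset.empty_subset _)
    (fun r hr => absurd hr (Finset.notMem_empty r))
    Relation.ReflTransGen.refl
    (fun ℓ hτℓ x hx hΓx => consSet_init hx hΓx)
    (fun ℓ hℓ => by simpa using le_trans (le_max_left _ 1) (Nat.le_add_right _ _))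
  -- polynomial bounds
  have hAleτ : A ≤ AP.eval (lvlSize Γ X τ ν) := by
    have hcardpi : A = (consFin zero one Γ X ν τ).card ^ u := by
      rw [hAdef, hAFdef, Fintype.card_piFinset]
      simp [Finset.prod_const, Fintype.card_coe, hu]
    rw [hcardpi, hAPdef, apPoly_eval]
    exact Nat.pow_le_pow_left (le_trans card_consFin (by omega)) u
  have hmanti : ∀ {a b : ℕ}, a ≤ b → lvlSize Γ X b ν ≤ lvlSize Γ X a ν :=
    fun h => lvlSize_anti h ν
  have hBfle : ∀ ℓ, 1 ≤ ℓ → ℓ ≤ τ → Bf ℓ ≤ SP.eval (lvlSize Γ X ℓ ν) := by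
    intro ℓ h1 h2
    rw [hBfdef]
    refine le_trans (loopBB_le (m := fun ℓ => lvlSize Γ X ℓ ν) (fun h => hmanti h)
      hAleτ (τ - ℓ) ℓ h2 rfl) ?_
    rw [hSPdef]
    exact pp_le_sp (by omega) _
  refine ⟨μ', N, hE, ?_, ?_⟩
  · -- cost bound
    have hAle1 : A ≤ AP.eval (lvlSize Γ X 1 ν) :=
      le_trans hAleτ (peval_mono _ (hmanti hτ))
    have hBf1 : Bf 1 ≤ SP.eval (lvlSize Γ X 1 ν) := hBfle 1 le_rfl hτ
    have hFcb : Fcb.eval (Bf 1) ≤ Fcb.eval (SP.eval (lvlSize Γ X 1 ν)) :=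
      peval_mono _ hBf1
    have heval : (Polynomial.C 1 + (AP + 1) *
        (Polynomial.C (2 + esize e) + Fcb.comp SP)).eval (lvlSize Γ X 1 ν) =
        1 + (AP.eval (lvlSize Γ X 1 ν) + 1) *
          ((2 + esize e) + Fcb.eval (SP.eval (lvlSize Γ X 1 ν))) := by
      simp [Polynomial.eval_add, Polynomial.eval_mul, Polynomial.eval_one,
        Polynomial.eval_C, Polynomial.eval_comp]
    rw [heval]
    have hmul : (A + 1) * CC ≤ (AP.eval (lvlSize Γ X 1 ν) + 1) *
        ((2 + esize e) + Fcb.eval (SP.eval (lvlSize Γ X 1 ν))) :=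
      Nat.mul_le_mul (by omega) (by omega)
    omega
  · -- growth bound
    intro ℓ
    by_cases hcase : τ ≤ ℓ
    · have := lvlSize_le_of_consSet (hM' ℓ hcase)
      exact le_trans this (Nat.le_add_right _ _)
    · have hG := hG' ℓ (by omega)
      have hAℓ : A ≤ AP.eval (lvlSize Γ X (ℓ+1) ν) :=
        le_trans hAleτ (peval_mono _ (hmanti (by omega)))
      have hBfℓ : Bf (ℓ+1) ≤ SP.eval (lvlSize Γ X (ℓ+1) ν) := hBfle (ℓ+1) (by omega) (by omega)
      have heval : (AP * Fgb.comp SP).eval (lvlSize Γ X (ℓ+1) ν) =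
          AP.eval (lvlSize Γ X (ℓ+1) ν) * Fgb.eval (SP.eval (lvlSize Γ X (ℓ+1) ν)) := by
        simp [Polynomial.eval_mul, Polynomial.eval_comp]
      rw [heval]
      have hmul : A * Fgb.eval (Bf (ℓ+1)) ≤
          AP.eval (lvlSize Γ X (ℓ+1) ν) * Fgb.eval (SP.eval (lvlSize Γ X (ℓ+1) ν)) :=
        Nat.mul_le_mul hAℓ (peval_mono _ hBfℓ)
      omega

end LoopLem

section MainInd

variable {σ : Type} {O : OpSig σ} [Fintype σ] [DecidableEq σ]
variable {zero one : σ} {Γ : ℕ → ℕ} {Δ : OpEnv O} {X : Finset ℕ}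

/-- Main induction: cost/termination/growth bounds for all well-typed statements,
in the in-loop form (`τin, τout ≥ 1`) and the top-level form (`τin = τout = 0`). -/
lemma mainInd (hΔ : SafeOpEnv zero one Δ) {Qop : O.Op → Polynomial ℕ}
    (hQop : ∀ (o : O.Op) ws, (O.sem o ws).length ≤ (Qop o).eval (maxSize ws))
    {τin τout t : ℕ} {s : Stmt O} (D : TypS Γ Δ τin τout s t) :
    stmtVars s ⊆ X →
    ((1 ≤ τin ∧ 1 ≤ τout) →
      ∃ Fc Fg : Polynomial ℕ, ∀ μ, NoRepeat one s μ →
        ∃ b μ' N, EvalSN one μ s (b, μ') N ∧ N ≤ Fc.eval (lvlSize Γ X 1 μ) ∧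
          ∀ ℓ, lvlSize Γ X ℓ μ' ≤ max (lvlSize Γ X ℓ μ) 1 +
            Fg.eval (lvlSize Γ X (ℓ+1) μ)) ∧
    ((τin = 0 ∧ τout = 0) →
      ∃ Fc Fg : Polynomial ℕ, ∀ μ, NoRepeat one s μ →
        ∃ b μ' N, EvalSN one μ s (b, μ') N ∧ N ≤ Fc.eval (lvlSize Γ X 0 μ) ∧
          lvlSize Γ X 0 μ' ≤ Fg.eval (lvlSize Γ X 0 μ)) := by
  induction D with
  | sub _ _ _ _ _ _ hle ih => exact ih
  | skip _ _ =>
    intro hX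
    constructor
    · intro _
      refine ⟨Polynomial.C 1, 0, fun μ _ => ⟨true, μ, 1, .skip μ, by simp, fun ℓ => ?_⟩⟩
      simp only [Polynomial.eval_zero]
      omega
    · intro _
      exact ⟨Polynomial.C 1, Polynomial.X, fun μ _ => ⟨true, μ, 1, .skip μ, by simp, by simp⟩⟩
  | assign _ _ x e τ₂ hTe hcond =>
    intro hX
    obtain ⟨hxX, hXe⟩ := Finset.insert_subset_iff.mp (by simpa [stmtVars] using hX)
    constructor
    · rintro ⟨h1, h2⟩
      refine ⟨Polynomial.C (1 + esize e), Polynomial.C (cExpr e), fun μ _ => ?_⟩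
      obtain ⟨w, hw⟩ := exprTotal one μ e
      refine ⟨true, _, 1 + esize e, .assign _ _ _ _ _ hw, by simp, ?_⟩
      intro ℓ
      have hΓτ₂ : Γ x ≤ τ₂ := by
        rcases hcond with h0 | h0
        · omega
        · exact h0
      simp only [Polynomial.eval_C]
      by_cases hcase : ℓ ≤ Γ x
      · have hwlen : w.length ≤ max (lvlSize Γ X τ₂ μ) 1 + cExpr e :=
          exprSize hΔ hw.toEvalE hTe h2 hXe
        have hupd : lvlSize Γ X ℓ (Function.update μ x w) ≤
            max (lvlSize Γ X ℓ μ) w.length := lvlSize_update_le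
        have h3 : lvlSize Γ X τ₂ μ ≤ lvlSize Γ X ℓ μ :=
          lvlSize_anti (le_trans hcase hΓτ₂) μ
        omega
      · rw [lvlSize_update_of_lt (by omega)]
        omega
    · rintro ⟨h1, h2⟩
      refine ⟨Polynomial.C (1 + esize e), Polynomial.X + qExpr Qop e, fun μ _ => ?_⟩
      obtain ⟨w, hw⟩ := exprTotal one μ e
      refine ⟨true, _, 1 + esize e, .assign _ _ _ _ _ hw, by simp, ?_⟩
      have hwlen : w.length ≤ (qExpr Qop e).eval (lvlSize Γ X 0 μ) :=
        exprSizeTop hQop hw.toEvalE hXe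
      have hupd : lvlSize Γ X 0 (Function.update μ x w) ≤
          max (lvlSize Γ X 0 μ) w.length := lvlSize_update_le
      simp only [Polynomial.eval_add, Polynomial.eval_X]
      omega
  | seq _ _ s₁ s₂ t' hT1 hT2 ih₁ ih₂ =>
    intro hX
    have hX1 : stmtVars s₁ ⊆ X :=
      (Finset.union_subset_iff.mp (by simpa [stmtVars] using hX)).1
    have hX2 : stmtVars s₂ ⊆ X :=
      (Finset.union_subset_iff.mp (by simpa [stmtVars] using hX)).2
    constructor
    · intro h12
      obtain ⟨Fc₁, Fg₁, H₁⟩ := (ih₁ hX1).1 h12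
      obtain ⟨Fc₂, Fg₂, H₂⟩ := (ih₂ hX2).1 h12
      refine ⟨Polynomial.C 1 + Fc₁ + Fc₂.comp (Polynomial.X + 1 + Fg₁),
        Fg₁ + Fg₂.comp (Polynomial.X + 1 + Fg₁), fun μ hNR => ?_⟩
      have hNR1 : NoRepeat one s₁ μ :=
        noRepeat_mono (Relation.ReflTransGen.single (.seq_left _ _ _)) hNR
      obtain ⟨b₁, μ₁, N₁, hE₁, hN₁, hG₁⟩ := H₁ μ hNR1
      have hevalc : ∀ t0 : ℕ, (Polynomial.C 1 + Fc₁ + Fc₂.comp (Polynomial.X + 1 + Fg₁)).eval t0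
          = 1 + Fc₁.eval t0 + Fc₂.eval (t0 + 1 + Fg₁.eval t0) := by
        intro t0
        simp [Polynomial.eval_add, Polynomial.eval_comp, Polynomial.eval_one,
          Polynomial.eval_C, Polynomial.eval_X]
      have hevalg : ∀ t0 : ℕ, (Fg₁ + Fg₂.comp (Polynomial.X + 1 + Fg₁)).eval t0
          = Fg₁.eval t0 + Fg₂.eval (t0 + 1 + Fg₁.eval t0) := by
        intro t0
        simp [Polynomial.eval_add, Polynomial.eval_comp, Polynomial.eval_one,
          Polynomial.eval_X]
      cases b₁ with
      | false =>
        refine ⟨false, μ₁, 1 + N₁, .seq_brk _ _ _ _ _ hE₁, ?_, ?_⟩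
        · rw [hevalc]; omega
        · intro ℓ
          rw [hevalg]
          have := hG₁ ℓ
          omega
      | true =>
        have hNR2 : NoRepeat one s₂ μ₁ :=
          noRepeat_mono (Relation.ReflTransGen.single (.seq_right _ _ _ _ hE₁.toEvalS)) hNR
        obtain ⟨b₂, μ₂, N₂, hE₂, hN₂, hG₂⟩ := H₂ μ₁ hNR2
        refine ⟨b₂, μ₂, 1 + N₁ + N₂, .seq_top _ _ _ _ _ _ _ hE₁ hE₂, ?_, ?_⟩
        · rw [hevalc]
          have hm1 : lvlSize Γ X 1 μ₁ ≤ lvlSize Γ X 1 μ + 1 + Fg₁.eval (lvlSize Γ X 1 μ) := by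
            have := hG₁ 1
            have h2 : Fg₁.eval (lvlSize Γ X (1+1) μ) ≤ Fg₁.eval (lvlSize Γ X 1 μ) :=
              peval_mono _ (lvlSize_anti (by omega) μ)
            omega
          have hN₂' : N₂ ≤ Fc₂.eval (lvlSize Γ X 1 μ + 1 + Fg₁.eval (lvlSize Γ X 1 μ)) :=
            le_trans hN₂ (peval_mono _ hm1)
          omega
        · intro ℓ
          rw [hevalg]
          have hg1 := hG₁ ℓ
          have hg2 := hG₂ ℓ
          have hm1 : lvlSize Γ X (ℓ+1) μ₁ ≤
              lvlSize Γ X (ℓ+1) μ + 1 + Fg₁.eval (lvlSize Γ X (ℓ+1) μ) := by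
            have := hG₁ (ℓ+1)
            have h2 : Fg₁.eval (lvlSize Γ X (ℓ+1+1) μ) ≤ Fg₁.eval (lvlSize Γ X (ℓ+1) μ) :=
              peval_mono _ (lvlSize_anti (by omega) μ)
            omega
          have h3 : Fg₂.eval (lvlSize Γ X (ℓ+1) μ₁) ≤
              Fg₂.eval (lvlSize Γ X (ℓ+1) μ + 1 + Fg₁.eval (lvlSize Γ X (ℓ+1) μ)) :=
            peval_mono _ hm1
          omega
    · intro h00
      obtain ⟨Fc₁, Fg₁, H₁⟩ := (ih₁ hX1).2 h00
      obtain ⟨Fc₂, Fg₂, H₂⟩ := (ih₂ hX2).2 h00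
      refine ⟨Polynomial.C 1 + Fc₁ + Fc₂.comp Fg₁, Fg₁ + Fg₂.comp Fg₁, fun μ hNR => ?_⟩
      have hNR1 : NoRepeat one s₁ μ :=
        noRepeat_mono (Relation.ReflTransGen.single (.seq_left _ _ _)) hNR
      obtain ⟨b₁, μ₁, N₁, hE₁, hN₁, hG₁⟩ := H₁ μ hNR1
      have hevalc : ∀ t0 : ℕ, (Polynomial.C 1 + Fc₁ + Fc₂.comp Fg₁).eval t0
          = 1 + Fc₁.eval t0 + Fc₂.eval (Fg₁.eval t0) := by
        intro t0
        simp [Polynomial.eval_add, Polynomial.eval_comp, Polynomial.eval_one,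
          Polynomial.eval_C]
      have hevalg : ∀ t0 : ℕ, (Fg₁ + Fg₂.comp Fg₁).eval t0
          = Fg₁.eval t0 + Fg₂.eval (Fg₁.eval t0) := by
        intro t0
        simp [Polynomial.eval_add, Polynomial.eval_comp]
      cases b₁ with
      | false =>
        refine ⟨false, μ₁, 1 + N₁, .seq_brk _ _ _ _ _ hE₁, ?_, ?_⟩
        · rw [hevalc]; omega
        · rw [hevalg]; omega
      | true =>
        have hNR2 : NoRepeat one s₂ μ₁ :=
          noRepeat_mono (Relation.ReflTransGen.single (.seq_right _ _ _ _ hE₁.toEvalS)) hNR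
        obtain ⟨b₂, μ₂, N₂, hE₂, hN₂, hG₂⟩ := H₂ μ₁ hNR2
        refine ⟨b₂, μ₂, 1 + N₁ + N₂, .seq_top _ _ _ _ _ _ _ hE₁ hE₂, ?_, ?_⟩
        · rw [hevalc]
          have hN₂' : N₂ ≤ Fc₂.eval (Fg₁.eval (lvlSize Γ X 0 μ)) :=
            le_trans hN₂ (peval_mono _ hG₁)
          omega
        · rw [hevalg]
          have hG₂' : lvlSize Γ X 0 μ₂ ≤ Fg₂.eval (Fg₁.eval (lvlSize Γ X 0 μ)) :=
            le_trans hG₂ (peval_mono _ hG₁)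
          omega
  | cond _ _ e s₁ s₀ t' hTe hT1 hT0 ih₁ ih₀ =>
    intro hX
    have hXe : exprVars e ⊆ X := by
      intro z hz
      exact hX (by simp only [stmtVars, Finset.mem_union]; exact Or.inl hz)
    have hX1 : stmtVars s₁ ⊆ X := by
      intro z hz
      exact hX (by simp only [stmtVars, Finset.mem_union]; exact Or.inr (Or.inl hz))
    have hX0 : stmtVars s₀ ⊆ X := by
      intro z hz
      exact hX (by simp only [stmtVars, Finset.mem_union]; exact Or.inr (Or.inr hz))
    constructor
    · intro h12
      obtain ⟨Fc₁, Fg₁, H₁⟩ := (ih₁ hX1).1 h12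
      obtain ⟨Fc₀, Fg₀, H₀⟩ := (ih₀ hX0).1 h12
      refine ⟨Polynomial.C (1 + esize e) + Fc₁ + Fc₀, Fg₁ + Fg₀, fun μ hNR => ?_⟩
      obtain ⟨w, hw⟩ := exprTotal one μ e
      have hevalc : ∀ t0 : ℕ, (Polynomial.C (1 + esize e) + Fc₁ + Fc₀).eval t0
          = 1 + esize e + Fc₁.eval t0 + Fc₀.eval t0 := by
        intro t0; simp [Polynomial.eval_add, Polynomial.eval_C]; try ring
      by_cases hwone : w = [one]
      · subst hwone
        have hNR1 : NoRepeat one s₁ μ :=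
          noRepeat_mono (Relation.ReflTransGen.single (.ite_true _ _ _ _ hw.toEvalE)) hNR
        obtain ⟨b₁, μ₁, N₁, hE₁, hN₁, hG₁⟩ := H₁ μ hNR1
        refine ⟨b₁, μ₁, 1 + esize e + N₁, .ite_true _ _ _ _ _ _ _ hw hE₁, ?_, ?_⟩
        · rw [hevalc]; omega
        · intro ℓ
          have := hG₁ ℓ
          simp only [Polynomial.eval_add]
          omega
      · have hNR0 : NoRepeat one s₀ μ :=
          noRepeat_mono (Relation.ReflTransGen.single (.ite_false _ _ _ _ _ hw.toEvalE hwone)) hNR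
        obtain ⟨b₀, μ₀, N₀, hE₀, hN₀, hG₀⟩ := H₀ μ hNR0
        refine ⟨b₀, μ₀, 1 + esize e + N₀, .ite_false _ _ _ _ _ _ _ _ hw hwone hE₀, ?_, ?_⟩
        · rw [hevalc]; omega
        · intro ℓ
          have := hG₀ ℓ
          simp only [Polynomial.eval_add]
          omega
    · intro h00
      obtain ⟨Fc₁, Fg₁, H₁⟩ := (ih₁ hX1).2 h00
      obtain ⟨Fc₀, Fg₀, H₀⟩ := (ih₀ hX0).2 h00
      refine ⟨Polynomial.C (1 + esize e) + Fc₁ + Fc₀, Fg₁ + Fg₀, fun μ hNR => ?_⟩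
      obtain ⟨w, hw⟩ := exprTotal one μ e
      have hevalc : ∀ t0 : ℕ, (Polynomial.C (1 + esize e) + Fc₁ + Fc₀).eval t0
          = 1 + esize e + Fc₁.eval t0 + Fc₀.eval t0 := by
        intro t0; simp [Polynomial.eval_add, Polynomial.eval_C]; try ring
      by_cases hwone : w = [one]
      · subst hwone
        have hNR1 : NoRepeat one s₁ μ :=
          noRepeat_mono (Relation.ReflTransGen.single (.ite_true _ _ _ _ hw.toEvalE)) hNR
        obtain ⟨b₁, μ₁, N₁, hE₁, hN₁, hG₁⟩ := H₁ μ hNR1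
        refine ⟨b₁, μ₁, 1 + esize e + N₁, .ite_true _ _ _ _ _ _ _ hw hE₁, ?_, ?_⟩
        · rw [hevalc]; omega
        · simp only [Polynomial.eval_add]; omega
      · have hNR0 : NoRepeat one s₀ μ :=
          noRepeat_mono (Relation.ReflTransGen.single (.ite_false _ _ _ _ _ hw.toEvalE hwone)) hNR
        obtain ⟨b₀, μ₀, N₀, hE₀, hN₀, hG₀⟩ := H₀ μ hNR0
        refine ⟨b₀, μ₀, 1 + esize e + N₀, .ite_false _ _ _ _ _ _ _ _ hw hwone hE₀, ?_, ?_⟩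
        · rw [hevalc]; omega
        · simp only [Polynomial.eval_add]; omega
  | whileNested _ _ e s' τ' hTe hTs h1τ hτle ih =>
    intro hX
    have hXe : exprVars e ⊆ X :=
      (Finset.union_subset_iff.mp (by simpa [stmtVars] using hX)).1
    have hXs' : stmtVars s' ⊆ X :=
      (Finset.union_subset_iff.mp (by simpa [stmtVars] using hX)).2
    constructor
    · intro _
      obtain ⟨Fcb, Fgb, Hb⟩ := (ih hXs').1 ⟨h1τ, le_trans h1τ hτle⟩
      obtain ⟨Fc, Fg, H⟩ := loopLem hΔ h1τ hτle hTe hTs hXe hXs' Fcb Fgb Hb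
      refine ⟨Fc, Fg, fun μ hNR => ?_⟩
      obtain ⟨μ', N, a, b, c⟩ := H μ hNR
      exact ⟨true, μ', N, a, b, c⟩
    · rintro ⟨-, h0⟩
      exact absurd (le_trans h1τ hτle) (by omega)
  | whileInit e s' τ' hTe hTs h1τ ih =>
    intro hX
    have hXe : exprVars e ⊆ X :=
      (Finset.union_subset_iff.mp (by simpa [stmtVars] using hX)).1
    have hXs' : stmtVars s' ⊆ X :=
      (Finset.union_subset_iff.mp (by simpa [stmtVars] using hX)).2
    constructor
    · rintro ⟨h1, -⟩
      exact absurd h1 (by omega)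
    · intro _
      obtain ⟨Fcb, Fgb, Hb⟩ := (ih hXs').1 ⟨h1τ, h1τ⟩
      obtain ⟨Fc, Fg, H⟩ := loopLem hΔ h1τ le_rfl hTe hTs hXe hXs' Fcb Fgb Hb
      refine ⟨Fc, Polynomial.X + 1 + Fg, fun μ hNR => ?_⟩
      obtain ⟨μ', N, hE, hN, hG⟩ := H μ hNR
      refine ⟨true, μ', N, hE, ?_, ?_⟩
      · exact le_trans hN (peval_mono _ (lvlSize_anti (Nat.zero_le 1) μ))
      · have h0 := hG 0
        have h2 : Fg.eval (lvlSize Γ X (0+1) μ) ≤ Fg.eval (lvlSize Γ X 0 μ) :=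
          peval_mono _ (lvlSize_anti (by omega) μ)
        simp only [Polynomial.eval_add, Polynomial.eval_X, Polynomial.eval_one]
        omega
  | brk _ _ e τ' hTe hle =>
    intro hX
    constructor
    · intro _
      refine ⟨Polynomial.C (1 + esize e), 0, fun μ _ => ?_⟩
      obtain ⟨w, hw⟩ := exprTotal one μ e
      by_cases hwone : w = [one]
      · subst hwone
        refine ⟨false, μ, 1 + esize e, .brk_true _ _ _ hw, by simp, fun ℓ => ?_⟩
        simp only [Polynomial.eval_zero]
        omega
      · refine ⟨true, μ, 1 + esize e, .brk_false _ _ _ _ hw hwone, by simp, fun ℓ => ?_⟩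
        simp only [Polynomial.eval_zero]
        omega
    · intro _
      refine ⟨Polynomial.C (1 + esize e), Polynomial.X, fun μ _ => ?_⟩
      obtain ⟨w, hw⟩ := exprTotal one μ e
      by_cases hwone : w = [one]
      · subst hwone
        exact ⟨false, μ, 1 + esize e, .brk_true _ _ _ hw, by simp, by simp⟩
      · exact ⟨true, μ, 1 + esize e, .brk_false _ _ _ _ hw hwone, by simp, by simp⟩

end MainInd

section Final

variable {σ : Type} {O : OpSig σ}

lemma foldl_update_cases (l : List (ℕ × Word σ)) (μ0 : Store σ) (x : ℕ) :
    (l.foldl (fun μ p => Function.update μ p.1 p.2) μ0) x = μ0 x ∨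
    ∃ p ∈ l, (l.foldl (fun μ p => Function.update μ p.1 p.2) μ0) x = p.2 := by
  induction l generalizing μ0 with
  | nil => exact Or.inl rfl
  | cons a l ih =>
    rcases ih (Function.update μ0 a.1 a.2) with h | ⟨p, hp, hh⟩
    · by_cases hx : x = a.1
      · subst hx
        exact Or.inr ⟨a, List.mem_cons_self, by rw [List.foldl_cons] at *; rw [h, Function.update_self]⟩
      · exact Or.inl (by rw [List.foldl_cons, h, Function.update_of_ne hx])
    · exact Or.inr ⟨p, List.mem_cons_of_mem _ hp, hh⟩

lemma initStore_length_le (P : Prog O) (ws : Fin P.arity → Word σ) (x : ℕ) :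
    ((initStore P ws) x).length ≤ Finset.univ.sum fun i => (ws i).length := by
  rcases foldl_update_cases (List.ofFn fun i => (P.params i, ws i)) (fun _ => []) x with
    h | ⟨p, hp, hh⟩
  · rw [initStore, h]
    exact Nat.zero_le _
  · rw [List.mem_ofFn] at hp
    obtain ⟨i, rfl⟩ := hp
    rw [initStore, hh]
    exact Finset.single_le_sum (f := fun i => (ws i).length)
      (fun j _ => Nat.zero_le _) (Finset.mem_univ i)

end Final

/-- **Polynomial runtime bound for safe aperiodic programs** (core of the
soundness proof): for every safe and aperiodic program there is a polynomial `Q`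
such that, on every input `w̄`, the evaluation tree of the body on the input
store is finite, with at most `Q(Σᵢ |wᵢ|)` nodes. -/
theorem safe_ap_polynomial_runtime (σ : Type) [Fintype σ] [DecidableEq σ]
    (zero one : σ) (hzo : zero ≠ one)
    (O : OpSig σ) (P : Prog O) (hsafe : Safe zero one P) (hap : Aperiodic one P) :
    ∃ Q : Polynomial ℕ, ∀ ws : Fin P.arity → Word σ,
      ∃ (b : Bool) (μ' : Store σ) (N : ℕ),
        EvalSN one (initStore P ws) P.body (b, μ') N ∧
        N ≤ Q.eval (Finset.univ.sum fun i => (ws i).length) := by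
  classical
  obtain ⟨Δ, hΔ, Γ, τt, D⟩ := hsafe
  have hQ : ∀ o : O.Op, ∃ Q : Polynomial ℕ, ∀ ws,
      (O.sem o ws).length ≤ Q.eval (maxSize ws) := by
    intro o
    rcases (hΔ o).1 with hn | hp | hq
    · rcases hn with hval | ⟨i, hsub⟩
      · refine ⟨Polynomial.C 1, fun ws => ?_⟩
        rcases hval ws with h | h <;> simp [h]
      · refine ⟨Polynomial.X, fun ws => ?_⟩
        simpa [maxSize] using le_trans (hsub ws).length_le
          (Finset.le_sup (f := fun i => (ws i).length) (Finset.mem_univ i))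
    · obtain ⟨c, hc⟩ := hp
      refine ⟨Polynomial.X + Polynomial.C c, fun ws => ?_⟩
      simpa using hc ws
    · exact hq
  choose Qop hQop using hQ
  have hmain := mainInd (one := one) (X := stmtVars P.body) hΔ hQop D (subset_refl _)
  obtain ⟨Fc, Fg, H⟩ := hmain.2 ⟨rfl, rfl⟩
  refine ⟨Fc, fun ws => ?_⟩
  obtain ⟨b, μ', N, hE, hN, -⟩ := H (initStore P ws) (hap _)
  refine ⟨b, μ', N, hE, le_trans hN (peval_mono _ ?_)⟩
  exact Finset.sup_le fun x _ => initStore_length_le P ws x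

end Declass
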